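/- arXiv:2209.08166 — 5 statements merged into one kernel-verified Lean document; each statement's English description precedes it below -/
import Mathlib

section
/- Let n, d be positive integers with d dividing n, let q ∈ (0,1), and let a : {0,…,n/d−1}×{0,…,d−1} → ℝ be a labeling of the (n,d)-spider. Let b denote the (random) trace of a under the deletion channel with deletion probability q. Then for all complex numbers w₁, w₂, the expected value of the generating function of the trace satisfies E[ Σ_{(i',j')} b_{i',j'} · w₁^{i'} · w₂^{j'} ] = (1−q) · Σ_{(i,j)} a_{i,j} · (q^d + (1−q^d)·w₁)^i · (q + (1−q)·w₂)^j, where both sums range over all pairs (i,j) with 0 ≤ i < n/d and 0 ≤ j < d. -/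
open Finset


/-- The list of legs of an `(m·d, d)`-spider that survive the deletion pattern `δ`
(`δ p = true` means node `p` is deleted), in their original left-to-right order.
A leg survives iff at least one of its `d` nodes survives. -/
def survivingLegs (m d : ℕ) (δ : Fin m × Fin d → Bool) : List (Fin m) :=
  (List.finRange m).filter fun i => (List.finRange d).any fun j => ! δ (i, j)

/-- The list of nodes of leg `i` that survive the deletion pattern `δ`,
in their original top-to-bottom order. -/
def survivingNodes (m d : ℕ) (δ : Fin m × Fin d → Bool) (i : Fin m) : List (Fin d) :=
  (List.finRange d).filter fun j => ! δ (i, j)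

/-- The (zero-padded) trace of the real-labeled spider `a` under deletion pattern `δ`:
position `(i', j')` of the trace holds the label of the `j'`-th surviving node of the
`i'`-th surviving leg when such a node exists, and `0` otherwise. -/
def spiderTrace {m d : ℕ} (a : Fin m × Fin d → ℝ) (δ : Fin m × Fin d → Bool) :
    Fin m × Fin d → ℝ := fun p =>
  ((survivingLegs m d δ)[(p.1 : ℕ)]?).elim 0 fun i =>
    ((survivingNodes m d δ i)[(p.2 : ℕ)]?).elim 0 fun j => a (i, j)

lemma opt_elim_cast {α : Type*} (o : Option α) (f : α → ℝ) :
    (((o.elim 0 f : ℝ)) : ℂ) = o.elim (0:ℂ) fun x => (f x : ℂ) := by cases o <;> simp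

lemma pow_countP {α M : Type*} [CommMonoid M] (l : List α) (p : α → Bool) (w : M) :
    w ^ l.countP p = (l.map fun y => if p y then w else 1).prod := by
  induction l with
  | nil => simp
  | cons h t ih =>
    by_cases hp : p h <;>
      simp [List.countP_cons, hp, pow_succ, ih, mul_comm]

lemma rank_lemma {α : Type*} [LinearOrder α] :
    ∀ (l : List α), l.Pairwise (· < ·) → ∀ (t : ℕ) (ht : t < l.length),
      (l.countP fun y => decide (y < l[t])) = t := by
  intro l
  induction l with
  | nil => simp
  | cons h tl ih =>
    intro hs t ht
    rw [List.pairwise_cons] at hs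
    match t with
    | 0 =>
      simp only [List.getElem_cons_zero, List.countP_cons, decide_eq_true_eq]
      have : List.countP (fun y => decide (y < h)) tl = 0 :=
        List.countP_eq_zero.2 fun y hy => by
          simp only [decide_eq_true_eq]
          exact not_lt.2 (hs.1 y hy).le
      rw [this, if_neg (by simp [lt_irrefl])]
    | t + 1 =>
      have ht' : t < tl.length := by simpa using ht
      simp only [List.getElem_cons_succ, List.countP_cons, decide_eq_true_eq]
      rw [ih hs.2 t ht', if_pos (hs.1 _ (tl.getElem_mem ht'))]

lemma sum_opt {k : ℕ} (P : Fin k → Bool) (f : Fin k → ℂ) (w : ℂ) :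
    ∑ t : Fin k, (((List.finRange k).filter P)[(t:ℕ)]?).elim 0 f * w ^ (t:ℕ)
      = ∑ x : Fin k, if P x then
          f x * w ^ ((List.finRange k).countP fun y => decide (y < x) && P y) else 0 := by
  set l := (List.finRange k).filter P with hldef
  have hnd : l.Nodup := (List.nodup_finRange k).filter _
  have hsorted : l.Pairwise (· < ·) := (List.pairwise_lt_finRange k).filter _
  have hlen : l.length ≤ k := by
    simpa using List.length_filter_le _ (List.finRange k)
  have hmem : ∀ x : Fin k, x ∈ l ↔ P x = true := by
    intro x; simp [hldef, List.mem_filter]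
  have hcnt : ∀ x : Fin k,
      ((List.finRange k).countP fun y => decide (y < x) && P y)
        = l.countP fun y => decide (y < x) := by
    intro x; rw [hldef, List.countP_filter]
  rw [Fin.sum_univ_eq_sum_range (fun t => ((l[t]?).elim 0 f) * w ^ t)]
  rw [← Finset.sum_subset (Finset.range_subset_range.mpr hlen) (by
    intro t _ ht
    rw [List.getElem?_eq_none (by simpa using ht)]
    simp)]
  rw [← Finset.sum_filter]
  refine Finset.sum_bij'
    (fun (t : ℕ) (ht : t ∈ Finset.range l.length) => l[t]'(by simpa using ht))
    (fun (x : Fin k) (hx : x ∈ Finset.univ.filter fun x => P x = true) => l.idxOf x)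
    ?_ ?_ ?_ ?_ ?_
  · intro t ht
    simp only [Finset.mem_filter, Finset.mem_univ, true_and]
    exact (hmem _).1 (l.getElem_mem _)
  · intro x hx
    simp only [Finset.mem_filter, Finset.mem_univ, true_and] at hx
    simpa using List.idxOf_lt_length_iff.2 ((hmem x).2 hx)
  · intro t ht
    exact hnd.idxOf_getElem _ _
  · intro x hx
    exact List.getElem_idxOf _
  · intro t ht
    rw [List.getElem?_eq_getElem (by simpa using ht)]
    simp only [Option.elim_some]
    rw [hcnt, rank_lemma l hsorted t (by simpa using ht)]

lemma traceSum (m d : ℕ) (a : Fin m × Fin d → ℝ) (δ : Fin m × Fin d → Bool) (w₁ w₂ : ℂ) :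
    ∑ p : Fin m × Fin d, (spiderTrace a δ p : ℂ) * w₁ ^ (p.1:ℕ) * w₂ ^ (p.2:ℕ)
    = ∑ p : Fin m × Fin d, (if δ p then 0 else
        (a p : ℂ)
          * w₁ ^ ((List.finRange m).countP fun y =>
              decide (y < p.1) && ((List.finRange d).any fun j => !δ (y, j)))
          * w₂ ^ ((List.finRange d).countP fun y => decide (y < p.2) && !δ (p.1, y))) := by
  rw [Fintype.sum_prod_type, Fintype.sum_prod_type]
  have step1 : ∀ i' : Fin m,
      (∑ j' : Fin d, (spiderTrace a δ (i', j') : ℂ) * w₁ ^ (i':ℕ) * w₂ ^ (j':ℕ))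
        = ((survivingLegs m d δ)[(i':ℕ)]?).elim 0
            (fun i => ∑ j' : Fin d,
              ((survivingNodes m d δ i)[(j':ℕ)]?).elim (0:ℂ) (fun j => (a (i,j) : ℂ))
                * w₂ ^ (j':ℕ))
          * w₁ ^ (i':ℕ) := by
    intro i'
    cases h : (survivingLegs m d δ)[(i':ℕ)]? with
    | none => simp [spiderTrace, h]
    | some i =>
      simp only [spiderTrace, h, Option.elim_some, Finset.sum_mul]
      refine Finset.sum_congr rfl fun j' _ => ?_
      rw [opt_elim_cast]
      ring
  simp only [step1]
  have step2 : ∀ i : Fin m,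
      (∑ j' : Fin d,
          ((survivingNodes m d δ i)[(j':ℕ)]?).elim (0:ℂ) (fun j => (a (i,j) : ℂ)) * w₂ ^ (j':ℕ))
        = ∑ j : Fin d, if !δ (i,j) then
            (a (i,j) : ℂ) * w₂ ^ ((List.finRange d).countP fun y => decide (y < j) && !δ (i,y))
          else 0 := fun i => sum_opt (fun j => !δ (i,j)) (fun j => (a (i,j) : ℂ)) w₂
  rw [show survivingLegs m d δ
      = (List.finRange m).filter (fun i => (List.finRange d).any fun j => !δ (i,j)) from rfl]
  rw [sum_opt (fun i => (List.finRange d).any fun j => !δ (i,j))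
      (fun i => ∑ j' : Fin d,
        ((survivingNodes m d δ i)[(j':ℕ)]?).elim (0:ℂ) (fun j => (a (i,j) : ℂ)) * w₂ ^ (j':ℕ)) w₁]
  refine Finset.sum_congr rfl fun i _ => ?_
  by_cases hP : ((List.finRange d).any fun j => !δ (i,j)) = true
  · rw [if_pos hP, step2, Finset.sum_mul]
    refine Finset.sum_congr rfl fun j _ => ?_
    cases hij : δ (i, j) with
    | true => simp [hij]
    | false => simp only [hij, Bool.not_false, if_true, Bool.false_eq_true, if_false]; ring
  · rw [if_neg hP]
    symm
    refine Finset.sum_eq_zero fun j _ => ?_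
    have : δ (i, j) = true := by
      by_contra hc
      exact hP (List.any_eq_true.2 ⟨j, List.mem_finRange j, by simp [Bool.not_eq_true] at hc ⊢; exact hc⟩)
    simp [this]

lemma prod_if_lt {M : Type*} [CommMonoid M] {k : ℕ} (i : Fin k) (A : M) :
    ∏ y : Fin k, (if y < i then A else 1) = A ^ (i:ℕ) := by
  have h0 : ∀ y : Fin k, (if y < i then A else 1) = (if (decide (y < i)) = true then A else 1) := by
    intro y; simp
  simp only [h0]
  rw [Fin.prod_univ_def, ← pow_countP]
  congr 1
  have hi : (i : ℕ) < (List.finRange k).length := by simpa using i.isLt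
  have := rank_lemma (List.finRange k) (List.pairwise_lt_finRange k) (i : ℕ) hi
  simp only [List.getElem_finRange, Fin.cast_mk, Fin.eta] at this
  rw [this]

lemma prod_split {M : Type*} [CommMonoid M] {k : ℕ} (i : Fin k) (A B : M) :
    ∏ y : Fin k, (if y < i then A else if y = i then B else 1) = A ^ (i:ℕ) * B := by
  have h0 : ∀ y : Fin k, (if y < i then A else if y = i then B else 1)
      = (if y < i then A else 1) * (if y = i then B else 1) := by
    intro y
    by_cases h1 : y < i
    · rw [if_pos h1, if_pos h1, if_neg (by rintro rfl; exact lt_irrefl _ h1), mul_one]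
    · rw [if_neg h1, if_neg h1, one_mul]
  simp only [h0]
  rw [Finset.prod_mul_distrib, prod_if_lt, Finset.prod_ite_eq' Finset.univ i (fun _ => B),
    if_pos (Finset.mem_univ i)]


lemma sum_w (d : ℕ) (q : ℝ) :
    ∑ v : Fin d → Bool, ∏ z : Fin d, (if v z then (q:ℂ) else 1-q) = 1 := by
  rw [← Fintype.prod_sum (fun (_ : Fin d) (b : Bool) => if b then (q:ℂ) else 1-q)]
  have h1 : ((q:ℂ)) + (1 - q) = 1 := by ring
  simp [Fintype.sum_bool, h1]

lemma sum_leg (d : ℕ) (q : ℝ) (w₁ : ℂ) :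
    ∑ v : Fin d → Bool, (∏ z : Fin d, (if v z then (q:ℂ) else 1-q)) *
      (if (List.finRange d).any (fun z => !v z) then w₁ else 1)
    = (q:ℂ)^d + (1 - (q:ℂ)^d) * w₁ := by
  classical
  have hite : ∀ v : Fin d → Bool,
      (if (List.finRange d).any (fun z => !v z) then w₁ else (1:ℂ))
        = w₁ + (if v = (fun _ => true) then 1 - w₁ else 0) := by
    intro v
    by_cases hv : v = fun _ => true
    · subst hv
      simp only [if_pos rfl]
      norm_num
    · have h2 : ((List.finRange d).any fun z => !v z) = true := by
        rw [List.any_eq_true]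
        by_contra hc
        push_neg at hc
        exact hv (funext fun z => by simpa using hc z (List.mem_finRange z))
      simp [h2, hv]
  simp only [hite, mul_add]
  rw [Finset.sum_add_distrib, ← Finset.sum_mul, sum_w d q, one_mul]
  simp only [mul_ite, mul_zero]
  rw [Finset.sum_ite_eq' Finset.univ (fun _ => true)
    (fun v => (∏ z : Fin d, (if v z then (q:ℂ) else 1-q)) * (1 - w₁)),
    if_pos (Finset.mem_univ _)]
  simp only [if_pos rfl, Finset.prod_const, Finset.card_univ, Fintype.card_fin]
  ring_nf
  simp

lemma sum_node (d : ℕ) (q : ℝ) (w₂ : ℂ) (j : Fin d) :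
    ∑ v : Fin d → Bool, (∏ z : Fin d, (if v z then (q:ℂ) else 1-q)) *
      (if v j then 0 else w₂ ^ ((List.finRange d).countP fun z => decide (z < j) && !v z))
    = (1 - (q:ℂ)) * ((q:ℂ) + (1-(q:ℂ))*w₂)^(j:ℕ) := by
  classical
  set G : Fin d → Bool → ℂ := fun z b =>
    (if b then (q:ℂ) else 1-q) * ((if (decide (z < j) && !b) = true then w₂ else 1) *
      (if z = j then (if b then 0 else 1) else 1)) with hG
  have key : ∀ v : Fin d → Bool,
      (∏ z : Fin d, (if v z then (q:ℂ) else 1-q)) *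
        (if v j then 0 else w₂ ^ ((List.finRange d).countP fun z => decide (z < j) && !v z))
      = ∏ z : Fin d, G z (v z) := by
    intro v
    simp only [hG]
    rw [Finset.prod_mul_distrib, Finset.prod_mul_distrib]
    rw [show ∏ z : Fin d, (if (decide (z < j) && !v z) = true then w₂ else 1)
        = w₂ ^ ((List.finRange d).countP fun z => decide (z < j) && !v z) from by
      rw [pow_countP, ← Fin.prod_univ_def]]
    rw [Finset.prod_ite_eq' Finset.univ j, if_pos (Finset.mem_univ j)]
    by_cases hvj : v j = true
    · simp [hvj]
    · simp only [Bool.not_eq_true] at hvj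
      simp only [hvj, Bool.false_eq_true, if_false]
      ring
  simp only [key]
  rw [← Fintype.prod_sum G]
  have hz : ∀ z : Fin d, ∑ b : Bool, G z b
      = if z < j then ((q:ℂ) + (1-(q:ℂ))*w₂) else if z = j then 1-(q:ℂ) else 1 := by
    intro z
    rw [Fintype.sum_bool]
    simp only [hG]
    by_cases h1 : z < j
    · have h2 : z ≠ j := ne_of_lt h1
      simp [h1, h2]
      try ring
    · by_cases h2 : z = j
      · subst h2
        simp [h1]
      · simp [h1, h2]
        try ring
  simp only [hz]
  rw [prod_split j ((q:ℂ) + (1-(q:ℂ))*w₂) (1-(q:ℂ))]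
  ring

lemma deltaSum {m d : ℕ} (q : ℝ) (w₁ w₂ : ℂ) (i : Fin m) (j : Fin d) :
    ∑ δ : Fin m × Fin d → Bool,
      (∏ p : Fin m × Fin d, (if δ p then (q:ℂ) else 1 - q)) *
        (if δ (i,j) then 0 else
          w₁ ^ ((List.finRange m).countP fun y =>
              decide (y < i) && ((List.finRange d).any fun j' => !δ (y, j')))
          * w₂ ^ ((List.finRange d).countP fun y => decide (y < j) && !δ (i, y)))
    = (((q:ℂ)^d + (1 - (q:ℂ)^d) * w₁)^(i:ℕ)) * ((1 - (q:ℂ)) * ((q:ℂ) + (1-(q:ℂ))*w₂)^(j:ℕ)) := by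
  classical
  set F : Fin m → (Fin d → Bool) → ℂ := fun y v =>
    (∏ z : Fin d, (if v z then (q:ℂ) else 1-q)) *
      (if y < i then (if (List.finRange d).any (fun z => !v z) then w₁ else 1)
       else if y = i then
         (if v j then 0 else w₂ ^ ((List.finRange d).countP fun z => decide (z < j) && !v z))
       else 1) with hF
  have key : ∀ g : Fin m → Fin d → Bool,
      (∏ p : Fin m × Fin d, (if g p.1 p.2 then (q:ℂ) else 1 - q)) *
        (if g i j then 0 else
          w₁ ^ ((List.finRange m).countP fun y =>
              decide (y < i) && ((List.finRange d).any fun j' => !g y j'))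
          * w₂ ^ ((List.finRange d).countP fun y => decide (y < j) && !g i y))
      = ∏ y : Fin m, F y (g y) := by
    intro g
    simp only [hF]
    rw [Finset.prod_mul_distrib]
    rw [show (∏ y : Fin m, ∏ z : Fin d, (if g y z then (q:ℂ) else 1-q))
        = ∏ p : Fin m × Fin d, (if g p.1 p.2 then (q:ℂ) else 1-q) from
      (Fintype.prod_prod_type (fun p : Fin m × Fin d => if g p.1 p.2 then (q:ℂ) else 1-q)).symm]
    congr 1
    -- second factor
    have h0 : ∀ y : Fin m,
        (if y < i then (if (List.finRange d).any (fun z => !g y z) then w₁ else 1)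
         else if y = i then
           (if g y j then 0 else w₂ ^ ((List.finRange d).countP fun z => decide (z < j) && !g y z))
         else 1)
        = (if (decide (y < i) && ((List.finRange d).any fun j' => !g y j')) = true then w₁ else 1)
          * (if y = i then
              (if g i j then 0 else
                w₂ ^ ((List.finRange d).countP fun z => decide (z < j) && !g i z))
              else 1) := by
      intro y
      by_cases h1 : y < i
      · have h2 : y ≠ i := by rintro rfl; exact lt_irrefl _ h1
        by_cases h3 : ((List.finRange d).any fun j' => !g y j') = true
        · simp [h1, h2, h3]
        · simp [h1, h2, h3]
      · by_cases h2 : y = i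
        · subst h2; simp [h1]
        · simp [h1, h2]
    simp only [h0]
    rw [Finset.prod_mul_distrib, Finset.prod_ite_eq' Finset.univ i, if_pos (Finset.mem_univ i)]
    rw [show (∏ y : Fin m, (if (decide (y < i) && ((List.finRange d).any fun j' => !g y j')) = true
          then w₁ else 1))
        = w₁ ^ ((List.finRange m).countP fun y =>
            decide (y < i) && ((List.finRange d).any fun j' => !g y j')) from by
      rw [pow_countP, ← Fin.prod_univ_def]]
    by_cases hgij : g i j = true
    · simp [hgij]
    · simp only [Bool.not_eq_true] at hgij
      simp only [hgij, Bool.false_eq_true, if_false]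
  have reindex : (∑ δ : Fin m × Fin d → Bool,
      (∏ p : Fin m × Fin d, (if δ p then (q:ℂ) else 1 - q)) *
        (if δ (i,j) then 0 else
          w₁ ^ ((List.finRange m).countP fun y =>
              decide (y < i) && ((List.finRange d).any fun j' => !δ (y, j')))
          * w₂ ^ ((List.finRange d).countP fun y => decide (y < j) && !δ (i, y))))
      = ∑ g : Fin m → Fin d → Bool,
        (∏ p : Fin m × Fin d, (if g p.1 p.2 then (q:ℂ) else 1 - q)) *
          (if g i j then 0 else
            w₁ ^ ((List.finRange m).countP fun y =>
                decide (y < i) && ((List.finRange d).any fun j' => !g y j'))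
            * w₂ ^ ((List.finRange d).countP fun y => decide (y < j) && !g i y)) := by
    rw [← Equiv.sum_comp (Equiv.curry (Fin m) (Fin d) Bool).symm]
    rfl
  rw [reindex]
  rw [Finset.sum_congr rfl fun g _ => key g]
  rw [← Fintype.prod_sum F]
  have hFy : ∀ y : Fin m, (∑ v : Fin d → Bool, F y v)
      = if y < i then ((q:ℂ)^d + (1-(q:ℂ)^d)*w₁)
        else if y = i then ((1-(q:ℂ)) * ((q:ℂ)+(1-(q:ℂ))*w₂)^(j:ℕ)) else 1 := by
    intro y
    by_cases h1 : y < i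
    · simp only [hF, h1, if_true]
      exact sum_leg d q w₁
    · by_cases h2 : y = i
      · subst h2
        simp only [hF, h1, if_false, if_pos rfl]
        exact sum_node d q w₂ j
      · have : ∀ v : Fin d → Bool, F y v = ∏ z : Fin d, (if v z then (q:ℂ) else 1-q) := by
          intro v
          simp only [hF]
          rw [if_neg h1, if_neg h2, mul_one]
        simp only [this]
        rw [if_neg h1, if_neg h2]
        exact sum_w d q
  simp only [hFy]
  exact prod_split i _ _


set_option maxHeartbeats 1000000 in
/-- Expected generating function of a trace of an `(n,d)`-spider through the deletion
channel with deletion probability `q`: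
`E[Σ b_{i',j'} w₁^{i'} w₂^{j'}] = (1−q) Σ a_{i,j} (q^d+(1−q^d)w₁)^i (q+(1−q)w₂)^j`.
The expectation is written out explicitly as a weighted sum over all deletion patterns. -/
theorem spider_generating_function (n d : ℕ) (hn : 0 < n) (hd : 0 < d) (hdvd : d ∣ n)
    (q : ℝ) (hq0 : 0 < q) (hq1 : q < 1)
    (a : Fin (n / d) × Fin d → ℝ) (w₁ w₂ : ℂ) :
    ∑ δ : Fin (n / d) × Fin d → Bool,
      ((∏ p : Fin (n / d) × Fin d, (if δ p then q else 1 - q) : ℝ) : ℂ) *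
        ∑ p : Fin (n / d) × Fin d,
          (spiderTrace a δ p : ℂ) * w₁ ^ (p.1 : ℕ) * w₂ ^ (p.2 : ℕ) =
    (1 - (q : ℂ)) * ∑ p : Fin (n / d) × Fin d,
      (a p : ℂ) * ((q : ℂ) ^ d + (1 - (q : ℂ) ^ d) * w₁) ^ (p.1 : ℕ) *
        ((q : ℂ) + (1 - (q : ℂ)) * w₂) ^ (p.2 : ℕ) := by
  have hW : ∀ δ : Fin (n / d) × Fin d → Bool,
      ((∏ p : Fin (n / d) × Fin d, (if δ p then q else 1 - q) : ℝ) : ℂ)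
        = ∏ p : Fin (n / d) × Fin d, (if δ p then (q:ℂ) else 1 - q) := by
    intro δ
    push_cast [apply_ite (fun x : ℝ => (x : ℂ))]
    rfl
  calc
    ∑ δ : Fin (n / d) × Fin d → Bool,
        ((∏ p : Fin (n / d) × Fin d, (if δ p then q else 1 - q) : ℝ) : ℂ) *
          ∑ p : Fin (n / d) × Fin d,
            (spiderTrace a δ p : ℂ) * w₁ ^ (p.1 : ℕ) * w₂ ^ (p.2 : ℕ)
      = ∑ δ : Fin (n / d) × Fin d → Bool,
          (∏ p : Fin (n / d) × Fin d, (if δ p then (q:ℂ) else 1 - q)) *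
            ∑ p : Fin (n / d) × Fin d, (if δ p then 0 else
              (a p : ℂ)
                * w₁ ^ ((List.finRange (n / d)).countP fun y =>
                    decide (y < p.1) && ((List.finRange d).any fun j => !δ (y, j)))
                * w₂ ^ ((List.finRange d).countP fun y => decide (y < p.2) && !δ (p.1, y))) := by
        refine Finset.sum_congr rfl fun δ _ => ?_
        rw [hW, traceSum]
    _ = ∑ p : Fin (n / d) × Fin d, ∑ δ : Fin (n / d) × Fin d → Bool,
          (∏ p' : Fin (n / d) × Fin d, (if δ p' then (q:ℂ) else 1 - q)) *
            (if δ p then 0 else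
              (a p : ℂ)
                * w₁ ^ ((List.finRange (n / d)).countP fun y =>
                    decide (y < p.1) && ((List.finRange d).any fun j => !δ (y, j)))
                * w₂ ^ ((List.finRange d).countP fun y => decide (y < p.2) && !δ (p.1, y))) := by
        simp only [Finset.mul_sum]
        rw [Finset.sum_comm]
    _ = ∑ p : Fin (n / d) × Fin d, (a p : ℂ) *
          ∑ δ : Fin (n / d) × Fin d → Bool,
            (∏ p' : Fin (n / d) × Fin d, (if δ p' then (q:ℂ) else 1 - q)) *
              (if δ p then 0 else
                w₁ ^ ((List.finRange (n / d)).countP fun y =>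
                    decide (y < p.1) && ((List.finRange d).any fun j => !δ (y, j)))
                * w₂ ^ ((List.finRange d).countP fun y => decide (y < p.2) && !δ (p.1, y))) := by
        refine Finset.sum_congr rfl fun p _ => ?_
        rw [Finset.mul_sum]
        refine Finset.sum_congr rfl fun δ _ => ?_
        by_cases h : δ p = true
        · simp [h]
        · simp only [Bool.not_eq_true] at h
          simp only [h, Bool.false_eq_true, if_false]
          ring
    _ = ∑ p : Fin (n / d) × Fin d, (a p : ℂ) *
          ((((q:ℂ)^d + (1 - (q:ℂ)^d) * w₁)^((p.1:ℕ))) *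
            ((1 - (q:ℂ)) * ((q:ℂ) + (1-(q:ℂ))*w₂)^((p.2:ℕ)))) := by
        refine Finset.sum_congr rfl fun p _ => ?_
        congr 1
        have := deltaSum q w₁ w₂ p.1 p.2
        simpa using this
    _ = (1 - (q : ℂ)) * ∑ p : Fin (n / d) × Fin d,
          (a p : ℂ) * ((q : ℂ) ^ d + (1 - (q : ℂ) ^ d) * w₁) ^ (p.1 : ℕ) *
            ((q : ℂ) + (1 - (q : ℂ)) * w₂) ^ (p.2 : ℕ) := by
        rw [Finset.mul_sum]
        refine Finset.sum_congr rfl fun p _ => ?_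
        ring
end

section
/- Let n, d be positive integers with d dividing n, let q ∈ (0,1), and let a : {0,…,n/d−1}×{0,…,d−1} → ℝ be a labeling of the (n,d)-spider. Let b denote the (random) trace of a under the deletion channel with deletion probability q. Then for every index (i',j') with 0 ≤ i' < n/d and 0 ≤ j' < d, E[b_{i',j'}] = (1−q) · Σ_{i ≥ i', j ≥ j'} a_{i,j} · C(i,i') · (1−q^d)^{i'} · q^{d(i−i')} · C(j,j') · (1−q)^{j'} · q^{j−j'}, where the sum ranges over all (i,j) with i' ≤ i < n/d and j' ≤ j < d, and C(·,·) denotes the binomial coefficient. -/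
namespace SpiderAux
open Finset



lemma cnt_succ (p : ℕ → Bool) (x : ℕ) :
    ((List.range (x+1)).filter p).length
      = ((List.range x).filter p).length + (if p x then 1 else 0) := by
  rw [List.range_succ, List.filter_append, List.length_append]
  by_cases h : p x <;> simp [h]

lemma cnt_mono (p : ℕ → Bool) : Monotone fun x => ((List.range x).filter p).length := by
  apply monotone_nat_of_le_succ
  intro x
  rw [cnt_succ]
  split <;> omega

lemma cnt_strict (p : ℕ → Bool) {x y : ℕ} (hxy : x < y) (hp : p x = true) :
    ((List.range x).filter p).length < ((List.range y).filter p).length := by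
  have h1 : ((List.range (x+1)).filter p).length = ((List.range x).filter p).length + 1 := by
    rw [cnt_succ, if_pos hp]
  have h2 := cnt_mono p (show x + 1 ≤ y from hxy)
  simp only at h2
  omega

lemma getElem?_filter_range (p : ℕ → Bool) (N : ℕ) :
    ∀ (k x : ℕ), ((List.range N).filter p)[k]? = some x ↔
      x < N ∧ p x = true ∧ ((List.range x).filter p).length = k := by
  induction N with
  | zero => intro k x; simp
  | succ N ih =>
    intro k x
    rw [List.range_succ, List.filter_append]
    by_cases hk : k < ((List.range N).filter p).length
    · rw [List.getElem?_append_left hk, ih]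
      constructor
      · rintro ⟨h1, h2, h3⟩; exact ⟨Nat.lt_succ_of_lt h1, h2, h3⟩
      · rintro ⟨h1, h2, h3⟩
        refine ⟨?_, h2, h3⟩
        rcases Nat.lt_succ_iff_lt_or_eq.1 h1 with h | rfl
        · exact h
        · omega
    · push_neg at hk
      rw [List.getElem?_append_right hk]
      by_cases hpN : p N
      · have hfil : List.filter p [N] = [N] := by simp [hpN]
        rw [hfil]
        constructor
        · intro h
          rcases hm : k - ((List.range N).filter p).length with _ | m
          · rw [hm] at h
            simp only [List.getElem?_cons_zero, Option.some.injEq] at h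
            subst h
            exact ⟨Nat.lt_succ_self N, hpN, by omega⟩
          · rw [hm] at h
            simp at h
        · rintro ⟨h1, h2, h3⟩
          have hxN : x = N := by
            by_contra hne
            have hxltN : x < N := by omega
            have := cnt_strict p hxltN h2
            omega
          subst hxN
          have h0 : k - ((List.range x).filter p).length = 0 := by omega
          rw [h0]
          simp
      · have hfil : List.filter p [N] = [] := by simp [hpN]
        rw [hfil]
        simp only [List.getElem?_nil]
        constructor
        · intro h; simp at h
        · rintro ⟨h1, h2, h3⟩
          have hxN : x ≠ N := by intro h; rw [h] at h2; simp [hpN] at h2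
          have hxltN : x < N := by omega
          have := cnt_strict p hxltN h2
          omega

lemma length_filter_range (p : ℕ → Bool) (n : ℕ) :
    ((List.range n).filter p).length = ((Finset.range n).filter fun t => p t = true).card := by
  induction n with
  | zero => simp
  | succ n ih =>
    rw [cnt_succ, Finset.range_add_one, Finset.filter_insert]
    by_cases h : p n
    · rw [if_pos h, if_pos h, Finset.card_insert_of_notMem (by simp)]
      omega
    · rw [if_neg h, if_neg h]
      omega


lemma getElem?_filter_finRange {N : ℕ} (p : Fin N → Bool) (k : ℕ) (x : Fin N) :
    ((List.finRange N).filter p)[k]? = some x ↔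
      p x = true ∧ (Finset.univ.filter fun y : Fin N => y < x ∧ p y = true).card = k := by
  classical
  set p' : ℕ → Bool := fun t => if h : t < N then p ⟨t, h⟩ else false with hp'
  have hcomp : (fun y : Fin N => p' y.val) = p := by
    funext y; simp [p', y.isLt]
  have hmap : (List.range N).filter p' = ((List.finRange N).filter p).map Fin.val := by
    rw [← List.map_coe_finRange_eq_range, List.filter_map]
    simp only [Function.comp_def]
    rw [hcomp]
  have key : ((List.finRange N).filter p)[k]? = some x ↔
      ((List.range N).filter p')[k]? = some (x : ℕ) := by
    rw [hmap, List.getElem?_map]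
    cases h : ((List.finRange N).filter p)[k]? with
    | none => simp
    | some y => simp [Fin.val_inj]
  have himg : ((Finset.univ.filter fun y : Fin N => y < x ∧ p y = true).image Fin.val)
      = (Finset.range (x : ℕ)).filter fun t => p' t = true := by
    ext t
    simp only [Finset.mem_image, Finset.mem_filter, Finset.mem_univ, true_and, Finset.mem_range]
    constructor
    · rintro ⟨y, ⟨hyx, hpy⟩, rfl⟩
      exact ⟨hyx, by simp [p', y.isLt, hpy]⟩
    · rintro ⟨htx, hpt⟩
      have htN : t < N := htx.trans x.isLt
      refine ⟨⟨t, htN⟩, ⟨htx, ?_⟩, rfl⟩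
      simpa [p', htN] using hpt
  have hcard : ((List.range (x : ℕ)).filter p').length
      = (Finset.univ.filter fun y : Fin N => y < x ∧ p y = true).card := by
    rw [length_filter_range, ← himg, Finset.card_image_of_injective _ Fin.val_injective]
  rw [key, getElem?_filter_range]
  have hpx : p' (x : ℕ) = p x := by simp [p']
  simp [x.isLt, hpx, hcard]

lemma card_filter_lt {N : ℕ} (x : Fin N) :
    (Finset.univ.filter fun y : Fin N => y < x).card = (x : ℕ) := by
  have himg : ((Finset.univ.filter fun y : Fin N => y < x).image Fin.val)
      = Finset.range (x : ℕ) := by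
    ext t
    simp only [Finset.mem_image, Finset.mem_filter, Finset.mem_univ, true_and, Finset.mem_range]
    constructor
    · rintro ⟨y, hyx, rfl⟩; exact hyx
    · intro htx
      exact ⟨⟨t, htx.trans x.isLt⟩, htx, rfl⟩
  rw [← Finset.card_image_of_injective _ Fin.val_injective, himg, Finset.card_range]

lemma ite_card_eq_sum {α : Type*} [DecidableEq α] (s : Finset α) (Q : α → Prop)
    [DecidablePred Q] (k : ℕ) :
    (if (s.filter Q).card = k then (1:ℝ) else 0)
      = ∑ T ∈ s.powersetCard k, ∏ a ∈ s, (if (Q a ↔ a ∈ T) then (1:ℝ) else 0) := by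
  have h1 : ∀ T ∈ s.powersetCard k,
      (∏ a ∈ s, (if (Q a ↔ a ∈ T) then (1:ℝ) else 0))
        = if s.filter Q = T then (1:ℝ) else 0 := by
    intro T hT
    rw [Finset.mem_powersetCard] at hT
    by_cases h : s.filter Q = T
    · rw [if_pos h]
      apply Finset.prod_eq_one
      intro a ha
      rw [if_pos]
      subst h
      simp [Finset.mem_filter, ha]
    · rw [if_neg h]
      have hex : ∃ a ∈ s, ¬ (Q a ↔ a ∈ T) := by
        by_contra hc
        push_neg at hc
        apply h
        ext a
        simp only [Finset.mem_filter]
        constructor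
        · rintro ⟨ha, hq⟩; exact (hc a ha).1 hq
        · intro haT; exact ⟨hT.1 haT, (hc a (hT.1 haT)).2 haT⟩
      obtain ⟨a, ha, hna⟩ := hex
      exact Finset.prod_eq_zero ha (if_neg hna)
  rw [Finset.sum_congr rfl h1, Finset.sum_ite_eq]
  simp [Finset.mem_powersetCard, Finset.filter_subset]

lemma master {N : ℕ} {β : Type*} [Fintype β] [DecidableEq β] (W : β → ℝ) (A : β → Bool)
    (Bind : β → ℝ) (x : Fin N) (k : ℕ) (hW : ∑ v : β, W v = 1) :
    ∑ g : Fin N → β, (∏ i, W (g i)) *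
      ((if (Finset.univ.filter fun y : Fin N => y < x ∧ A (g y) = true).card = k
          then (1:ℝ) else 0) * Bind (g x))
    = (Nat.choose (x : ℕ) k : ℝ)
        * (∑ v ∈ Finset.univ.filter fun v : β => A v = true, W v) ^ k
        * (∑ v ∈ Finset.univ.filter fun v : β => ¬ A v = true, W v) ^ ((x : ℕ) - k)
        * (∑ v : β, W v * Bind v) := by
  classical
  set s : Finset (Fin N) := Finset.univ.filter fun y => y < x with hs
  set X : ℝ := ∑ v ∈ Finset.univ.filter fun v : β => A v = true, W v with hX
  set Y : ℝ := ∑ v ∈ Finset.univ.filter fun v : β => ¬ A v = true, W v with hY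
  set Z : ℝ := ∑ v : β, W v * Bind v with hZ
  have hxs : x ∉ s := by simp [hs]
  have hscard : s.card = (x : ℕ) := card_filter_lt x
  have hstep : ∀ g : Fin N → β,
      (∏ i, W (g i)) *
        ((if (Finset.univ.filter fun y : Fin N => y < x ∧ A (g y) = true).card = k
            then (1:ℝ) else 0) * Bind (g x))
      = ∑ T ∈ s.powersetCard k, ∏ i : Fin N,
          (W (g i) * ((if i ∈ s then (if (A (g i) = true ↔ i ∈ T) then (1:ℝ) else 0) else 1)
            * (if i = x then Bind (g i) else 1))) := by
    intro g
    have hfil : (Finset.univ.filter fun y : Fin N => y < x ∧ A (g y) = true)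
        = s.filter fun y => A (g y) = true := by
      rw [hs, Finset.filter_filter]
    rw [hfil, ite_card_eq_sum s (fun y => A (g y) = true) k, Finset.sum_mul, Finset.mul_sum]
    refine Finset.sum_congr rfl ?_
    intro T hT
    rw [Finset.prod_mul_distrib, Finset.prod_mul_distrib, Finset.prod_ite_mem,
      Finset.univ_inter, Finset.prod_ite_eq', if_pos (Finset.mem_univ x)]
  rw [Finset.sum_congr rfl (fun g _ => hstep g), Finset.sum_comm]
  have hinner : ∀ T ∈ s.powersetCard k,
      (∑ g : Fin N → β, ∏ i : Fin N,
          (W (g i) * ((if i ∈ s then (if (A (g i) = true ↔ i ∈ T) then (1:ℝ) else 0) else 1)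
            * (if i = x then Bind (g i) else 1))))
      = X ^ k * Y ^ ((x : ℕ) - k) * Z := by
    intro T hT
    rw [Finset.mem_powersetCard] at hT
    rw [← Fintype.prod_sum (fun i v =>
      (W v * ((if i ∈ s then (if (A v = true ↔ i ∈ T) then (1:ℝ) else 0) else 1)
        * (if i = x then Bind v else 1))))]
    have hval : ∀ i : Fin N,
        (∑ v : β, (W v * ((if i ∈ s then (if (A v = true ↔ i ∈ T) then (1:ℝ) else 0) else 1)
          * (if i = x then Bind v else 1))))
        = if i ∈ s then (if i ∈ T then X else Y) else (if i = x then Z else 1) := by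
      intro i
      by_cases his : i ∈ s
      · have hix : i ≠ x := fun h => hxs (h ▸ his)
        rw [if_pos his]
        by_cases hiT : i ∈ T
        · rw [if_pos hiT, hX, Finset.sum_filter]
          refine Finset.sum_congr rfl fun v _ => ?_
          by_cases hA : A v <;> simp [his, hix, hiT, hA]
        · rw [if_neg hiT, hY, Finset.sum_filter]
          refine Finset.sum_congr rfl fun v _ => ?_
          by_cases hA : A v <;> simp [his, hix, hiT, hA]
      · rw [if_neg his]
        by_cases hix : i = x
        · subst hix
          rw [if_pos rfl, hZ]
          refine Finset.sum_congr rfl fun v _ => ?_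
          simp [his]
        · rw [if_neg hix]
          simp only [if_neg his, if_neg hix, one_mul, mul_one]
          exact hW
    rw [Finset.prod_congr rfl (fun i _ => hval i),
      ← Finset.prod_filter_mul_prod_filter_not Finset.univ (· ∈ s)]
    have h1 : Finset.univ.filter (· ∈ s) = s := by ext a; simp
    rw [h1]
    have h2 : (∏ i ∈ s, if i ∈ s then (if i ∈ T then X else Y) else (if i = x then Z else 1))
        = ∏ i ∈ s, (if i ∈ T then X else Y) :=
      Finset.prod_congr rfl (fun i hi => if_pos hi)
    have h3 : (∏ i ∈ Finset.univ.filter (fun i => ¬ i ∈ s),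
          if i ∈ s then (if i ∈ T then X else Y) else (if i = x then Z else 1))
        = ∏ i ∈ Finset.univ.filter (fun i => ¬ i ∈ s), (if i = x then Z else 1) := by
      refine Finset.prod_congr rfl fun i hi => ?_
      rw [Finset.mem_filter] at hi
      rw [if_neg hi.2]
    rw [h2, h3, Finset.prod_ite_eq']
    rw [if_pos (by simp [hxs])]
    rw [Finset.prod_ite (fun _ => X) (fun _ => Y), Finset.prod_const, Finset.prod_const]
    have hsT : s.filter (· ∈ T) = T := by
      ext a
      simp only [Finset.mem_filter]
      exact ⟨fun h => h.2, fun h => ⟨hT.1 h, h⟩⟩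
    have hcards : (s.filter (fun i => ¬ i ∈ T)).card = (x : ℕ) - k := by
      have h4 := Finset.card_filter_add_card_filter_not (s := s) (p := (· ∈ T))
      rw [hsT, hT.2, hscard] at h4
      omega
    rw [hsT, hT.2, hcards]
  rw [Finset.sum_congr rfl hinner, Finset.sum_const, Finset.card_powersetCard, hscard,
    nsmul_eq_mul]
  ring



lemma ite_and_mul (P Q : Prop) [Decidable P] [Decidable Q] :
    (if (P ∧ Q) then (1:ℝ) else 0) = (if Q then (1:ℝ) else 0) * (if P then (1:ℝ) else 0) := by
  by_cases hP : P <;> by_cases hQ : Q <;> simp [hP, hQ]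

lemma trace_eq_sum {m d : ℕ} (a : Fin m × Fin d → ℝ) (δ : Fin m × Fin d → Bool)
    (i' : Fin m) (j' : Fin d) :
    spiderTrace a δ (i', j') = ∑ p : Fin m × Fin d,
      if ((survivingLegs m d δ)[(i' : ℕ)]? = some p.1
          ∧ (survivingNodes m d δ p.1)[(j' : ℕ)]? = some p.2) then a p else 0 := by
  classical
  unfold spiderTrace
  cases h1 : (survivingLegs m d δ)[(i' : ℕ)]? with
  | none =>
    simp only [Option.elim]
    symm
    refine Finset.sum_eq_zero fun p _ => ?_
    rw [if_neg]
    rintro ⟨hp, -⟩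
    exact nomatch hp
  | some i0 =>
    simp only [Option.elim]
    cases h2 : (survivingNodes m d δ i0)[(j' : ℕ)]? with
    | none =>
      simp only [Option.elim]
      symm
      refine Finset.sum_eq_zero fun p _ => ?_
      rw [if_neg]
      rintro ⟨hp, hq⟩
      have e1 := Option.some.inj hp
      rw [← e1, h2] at hq
      exact nomatch hq
    | some j0 =>
      simp only [Option.elim]
      symm
      rw [Finset.sum_eq_single ((i0, j0) : Fin m × Fin d)]
      · have hc : (some i0 = some ((i0, j0) : Fin m × Fin d).1
            ∧ (survivingNodes m d δ ((i0, j0) : Fin m × Fin d).1)[(j' : ℕ)]?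
              = some ((i0, j0) : Fin m × Fin d).2) := ⟨rfl, h2⟩
        rw [if_pos hc]
      · intro p _ hne
        rw [if_neg]
        rintro ⟨hp, hq⟩
        have e1 := Option.some.inj hp
        rw [← e1, h2] at hq
        have e2 := Option.some.inj hq
        exact hne (Prod.ext e1.symm e2.symm)
      · intro h
        exact absurd (Finset.mem_univ _) h

section dist
variable (q : ℝ) (d : ℕ)

lemma hW2 : ∑ b : Bool, (if b then q else 1 - q) = 1 := by
  rw [Fintype.sum_bool]
  simp

lemma hX2 : (∑ b ∈ Finset.univ.filter fun b : Bool => (!b) = true, (if b then q else 1 - q))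
    = 1 - q := by
  rw [show (Finset.univ.filter fun b : Bool => (!b) = true) = {false} from by decide]
  simp

lemma hY2 : (∑ b ∈ Finset.univ.filter fun b : Bool => ¬ (!b) = true, (if b then q else 1 - q))
    = q := by
  rw [show (Finset.univ.filter fun b : Bool => ¬ (!b) = true) = {true} from by decide]
  simp

lemma hZ2 : ∑ b : Bool, (if b then q else 1 - q) * (if (!b) = true then (1:ℝ) else 0)
    = 1 - q := by
  rw [Fintype.sum_bool]
  simp

lemma hWd : ∑ v : Fin d → Bool, (∏ j₂, if v j₂ then q else 1 - q) = 1 := by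
  have h := Fintype.prod_sum (fun (_ : Fin d) (b : Bool) => if b then q else 1 - q)
  rw [← h]
  rw [Finset.prod_congr rfl (fun j₂ _ => hW2 q), Finset.prod_const_one]

lemma hYd : (∑ v ∈ Finset.univ.filter
      (fun v : Fin d → Bool => ¬ ((List.finRange d).any fun j₂ => ! v j₂) = true),
      (∏ j₂, if v j₂ then q else 1 - q)) = q ^ d := by
  have hset : (Finset.univ.filter
      fun v : Fin d → Bool => ¬ ((List.finRange d).any fun j₂ => ! v j₂) = true)
      = {fun _ => true} := by
    ext v
    simp only [Finset.mem_filter, Finset.mem_univ, true_and, Finset.mem_singleton,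
      List.any_eq_true]
    constructor
    · intro h
      funext j₂
      by_contra hb
      rw [Bool.not_eq_true] at hb
      exact h ⟨j₂, List.mem_finRange j₂, by simp [hb]⟩
    · rintro rfl
      simp
  rw [hset, Finset.sum_singleton]
  simp [Finset.prod_const]

lemma hXd : (∑ v ∈ Finset.univ.filter
      (fun v : Fin d → Bool => ((List.finRange d).any fun j₂ => ! v j₂) = true),
      (∏ j₂, if v j₂ then q else 1 - q)) = 1 - q ^ d := by
  have h := Finset.sum_filter_add_sum_filter_not Finset.univ
    (fun v : Fin d → Bool => ((List.finRange d).any fun j₂ => ! v j₂) = true)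
    (fun v => ∏ j₂, if v j₂ then q else 1 - q)
  rw [hWd q d, hYd q d] at h
  linarith

end dist

lemma key (m d : ℕ) (q : ℝ) (i' : Fin m) (j' : Fin d) (i : Fin m) (j : Fin d) :
    ∑ δ : Fin m × Fin d → Bool,
      (∏ r : Fin m × Fin d, (if δ r then q else 1 - q)) *
        (if ((survivingLegs m d δ)[(i' : ℕ)]? = some i
            ∧ (survivingNodes m d δ i)[(j' : ℕ)]? = some j) then (1:ℝ) else 0)
    = (Nat.choose (i : ℕ) (i' : ℕ) : ℝ) * (1 - q ^ d) ^ (i' : ℕ)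
        * (q ^ d) ^ ((i : ℕ) - (i' : ℕ))
        * ((Nat.choose (j : ℕ) (j' : ℕ) : ℝ) * (1 - q) ^ (j' : ℕ)
            * q ^ ((j : ℕ) - (j' : ℕ)) * (1 - q)) := by
  classical
  -- Z : the leg-i factor
  have hZleg : ∑ v : Fin d → Bool, (∏ j₂, if v j₂ then q else 1 - q) *
        (if (((List.finRange d).filter fun j₂ => ! v j₂)[(j' : ℕ)]? = some j)
          then (1:ℝ) else 0)
      = (Nat.choose (j : ℕ) (j' : ℕ) : ℝ) * (1 - q) ^ (j' : ℕ)
          * q ^ ((j : ℕ) - (j' : ℕ)) * (1 - q) := by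
    have hsplit : ∀ v : Fin d → Bool,
        (if (((List.finRange d).filter fun j₂ => ! v j₂)[(j' : ℕ)]? = some j)
          then (1:ℝ) else 0)
        = (if (Finset.univ.filter fun y : Fin d => y < j ∧ (! v y) = true).card = (j' : ℕ)
            then (1:ℝ) else 0) * (if (! v j) = true then (1:ℝ) else 0) := by
      intro v
      simp only [getElem?_filter_finRange]
      exact ite_and_mul _ _
    rw [Finset.sum_congr rfl (fun v _ => by rw [hsplit v])]
    refine Eq.trans (master (fun b : Bool => if b then q else 1 - q) (fun b => !b)
      (fun b => if (!b) = true then (1:ℝ) else 0) j (j' : ℕ) (hW2 q)) ?_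
    rw [hX2 q, hY2 q, hZ2 q]
  -- transfer to curried functions
  have h0 : (∑ δ : Fin m × Fin d → Bool,
      (∏ r : Fin m × Fin d, (if δ r then q else 1 - q)) *
        (if ((survivingLegs m d δ)[(i' : ℕ)]? = some i
            ∧ (survivingNodes m d δ i)[(j' : ℕ)]? = some j) then (1:ℝ) else 0))
      = ∑ g : Fin m → Fin d → Bool,
        (∏ i₂, ∏ j₂, (if g i₂ j₂ then q else 1 - q)) *
          (if ((((List.finRange m).filter fun i₂ =>
                (List.finRange d).any fun j₂ => ! g i₂ j₂)[(i' : ℕ)]? = some i)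
              ∧ (((List.finRange d).filter fun j₂ => ! g i j₂)[(j' : ℕ)]? = some j))
            then (1:ℝ) else 0) := by
    refine Fintype.sum_equiv (Equiv.curry (Fin m) (Fin d) Bool) _ _ ?_
    intro δ
    rw [Fintype.prod_prod_type]
    rfl
  rw [h0]
  -- rewrite indicator into master shape
  have hind : ∀ g : Fin m → Fin d → Bool,
      (if ((((List.finRange m).filter fun i₂ =>
            (List.finRange d).any fun j₂ => ! g i₂ j₂)[(i' : ℕ)]? = some i)
          ∧ (((List.finRange d).filter fun j₂ => ! g i j₂)[(j' : ℕ)]? = some j))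
        then (1:ℝ) else 0)
      = (if (Finset.univ.filter fun y : Fin m =>
            y < i ∧ ((List.finRange d).any fun j₂ => ! g y j₂) = true).card = (i' : ℕ)
          then (1:ℝ) else 0) *
        (if (((List.finRange d).filter fun j₂ => ! g i j₂)[(j' : ℕ)]? = some j)
          then (1:ℝ) else 0) := by
    intro g
    by_cases h2 : (((List.finRange d).filter fun j₂ => ! g i j₂)[(j' : ℕ)]? = some j)
    · have hA : ((List.finRange d).any fun j₂ => ! g i j₂) = true := by
        have h2' := (getElem?_filter_finRange (fun j₂ => ! g i j₂) (j' : ℕ) j).1 h2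
        rw [List.any_eq_true]
        exact ⟨j, List.mem_finRange j, h2'.1⟩
      rw [if_pos h2, mul_one]
      by_cases h3 : (Finset.univ.filter fun y : Fin m =>
          y < i ∧ ((List.finRange d).any fun j₂ => ! g y j₂) = true).card = (i' : ℕ)
      · rw [if_pos h3, if_pos]
        exact ⟨(getElem?_filter_finRange _ _ _).2 ⟨hA, h3⟩, h2⟩
      · rw [if_neg h3, if_neg]
        rintro ⟨hl, -⟩
        exact h3 ((getElem?_filter_finRange _ _ _).1 hl).2
    · rw [if_neg h2, mul_zero, if_neg]
      rintro ⟨-, hn⟩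
      exact h2 hn
  rw [Finset.sum_congr rfl (fun g _ => by rw [hind g])]
  refine Eq.trans (master (fun v : Fin d → Bool => ∏ j₂, if v j₂ then q else 1 - q)
    (fun v => (List.finRange d).any fun j₂ => ! v j₂)
    (fun v => if (((List.finRange d).filter fun j₂ => ! v j₂)[(j' : ℕ)]? = some j)
      then (1:ℝ) else 0) i (i' : ℕ) (hWd q d)) ?_
  rw [hXd q d, hYd q d, hZleg]


end SpiderAux

/-- The expected label at position `(i',j')` of a trace of an `(n,d)`-spider through the
deletion channel with deletion probability `q` equals
`(1−q) · Σ_{i ≥ i', j ≥ j'} a_{i,j} · C(i,i')(1−q^d)^{i'} q^{d(i−i')} · C(j,j')(1−q)^{j'} q^{j−j'}`.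
The expectation is written out explicitly as a weighted sum over all deletion patterns. -/
theorem spider_trace_expected_label (n d : ℕ) (hn : 0 < n) (hd : 0 < d) (hdvd : d ∣ n)
    (q : ℝ) (hq0 : 0 < q) (hq1 : q < 1)
    (a : Fin (n / d) × Fin d → ℝ) (i' : Fin (n / d)) (j' : Fin d) :
    ∑ δ : Fin (n / d) × Fin d → Bool,
      (∏ p : Fin (n / d) × Fin d, (if δ p then q else 1 - q)) * spiderTrace a δ (i', j') =
    (1 - q) * ∑ p ∈ Finset.univ.filter
        (fun p : Fin (n / d) × Fin d => (i' : ℕ) ≤ (p.1 : ℕ) ∧ (j' : ℕ) ≤ (p.2 : ℕ)),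
      a p * (Nat.choose (p.1 : ℕ) (i' : ℕ) : ℝ) * (1 - q ^ d) ^ (i' : ℕ) *
        q ^ (d * ((p.1 : ℕ) - (i' : ℕ))) * (Nat.choose (p.2 : ℕ) (j' : ℕ) : ℝ) *
        (1 - q) ^ (j' : ℕ) * q ^ ((p.2 : ℕ) - (j' : ℕ)) := by
  classical
  have step1 : ∀ δ : Fin (n / d) × Fin d → Bool,
      (∏ p : Fin (n / d) × Fin d, (if δ p then q else 1 - q)) * spiderTrace a δ (i', j')
      = ∑ p : Fin (n / d) × Fin d,
          a p * ((∏ r : Fin (n / d) × Fin d, (if δ r then q else 1 - q)) *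
            (if ((survivingLegs (n / d) d δ)[(i' : ℕ)]? = some p.1
                ∧ (survivingNodes (n / d) d δ p.1)[(j' : ℕ)]? = some p.2)
              then (1:ℝ) else 0)) := by
    intro δ
    rw [SpiderAux.trace_eq_sum, Finset.mul_sum]
    refine Finset.sum_congr rfl fun p _ => ?_
    by_cases h : ((survivingLegs (n / d) d δ)[(i' : ℕ)]? = some p.1
        ∧ (survivingNodes (n / d) d δ p.1)[(j' : ℕ)]? = some p.2)
    · rw [if_pos h, if_pos h]; ring
    · rw [if_neg h, if_neg h]; ring
  rw [Finset.sum_congr rfl (fun δ _ => step1 δ), Finset.sum_comm]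
  have step2 : ∀ p : Fin (n / d) × Fin d,
      (∑ δ : Fin (n / d) × Fin d → Bool,
        a p * ((∏ r : Fin (n / d) × Fin d, (if δ r then q else 1 - q)) *
          (if ((survivingLegs (n / d) d δ)[(i' : ℕ)]? = some p.1
              ∧ (survivingNodes (n / d) d δ p.1)[(j' : ℕ)]? = some p.2)
            then (1:ℝ) else 0)))
      = a p * ((Nat.choose (p.1 : ℕ) (i' : ℕ) : ℝ) * (1 - q ^ d) ^ (i' : ℕ)
          * (q ^ d) ^ ((p.1 : ℕ) - (i' : ℕ))
          * ((Nat.choose (p.2 : ℕ) (j' : ℕ) : ℝ) * (1 - q) ^ (j' : ℕ)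
              * q ^ ((p.2 : ℕ) - (j' : ℕ)) * (1 - q))) := by
    intro p
    rw [← Finset.mul_sum, SpiderAux.key]
  rw [Finset.sum_congr rfl (fun p _ => step2 p), Finset.mul_sum]
  rw [Finset.sum_filter_of_ne ?hz]
  case hz =>
    intro p _ hne
    by_contra hcon
    apply hne
    rw [not_and_or] at hcon
    rcases hcon with h | h <;> push_neg at h
    · rw [Nat.choose_eq_zero_of_lt h]; simp
    · rw [Nat.choose_eq_zero_of_lt h]; simp
  refine Finset.sum_congr rfl fun p _ => ?_
  rw [pow_mul]
  ring
end

section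
/- Let f(z₁,z₂) be a nonzero polynomial in two complex variables all of whose coefficients lie in {−1,0,1}, with degree at most a in z₁ and degree at most b in z₂, where a, b ≥ 1. Then for all positive integers L₁ and L₂, there exist real numbers θ₁, θ₂ with |θ₁| ≤ π/L₁ and |θ₂| ≤ π/L₂ such that |f(e^{iθ₁}, e^{iθ₂})| ≥ ((a+1)(b+1))^{−(L₁·L₂ − 1)}. -/
open Polynomial Finset Complex Real

-- geometric sum of root of unity
lemma BL.sum_pow_unity {x : ℂ} {N : ℕ} (hN : 0 < N) (hx : x ^ N = 1) :
    ∑ p ∈ Finset.range N, x ^ p = if x = 1 then (N : ℂ) else 0 := by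
  split_ifs with h
  · simp [h]
  · rw [geom_sum_eq h, hx]
    simp

lemma BL.zeta_pow (N : ℕ) (p : ℕ) :
    Complex.exp ((2 * Real.pi / N : ℝ) * Complex.I) ^ p
      = Complex.exp ((2 * Real.pi * p / N : ℝ) * Complex.I) := by
  rw [← Complex.exp_nat_mul]
  congr 1
  push_cast
  ring

-- sampling lemma
lemma BL.sample (q : Polynomial ℂ) (N : ℕ) (hN : 0 < N) (hd : q.natDegree < N) (m : ℕ) :
    ∃ p < N, ‖q.coeff m‖ ≤
      ‖q.eval (Complex.exp ((2 * Real.pi / N : ℝ) * Complex.I) ^ p)‖ := by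
  set ζ : ℂ := Complex.exp ((2 * Real.pi / N : ℝ) * Complex.I) with hζ
  have hζ1 : ζ ^ N = 1 := by
    rw [BL.zeta_pow]
    have hNne : (N : ℝ) ≠ 0 := Nat.cast_ne_zero.mpr hN.ne'
    rw [show (2 * Real.pi * N / N : ℝ) = (2 * Real.pi) by field_simp]
    simpa [mul_comm] using Complex.exp_two_pi_mul_I
  have habs : ∀ k : ℕ, ‖ζ ^ k‖ = 1 := by
    intro k
    rw [BL.zeta_pow]
    exact Complex.norm_exp_ofReal_mul_I _
  by_cases hm : N ≤ m
  · refine ⟨0, hN, ?_⟩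
    rw [Polynomial.coeff_eq_zero_of_natDegree_lt (lt_of_lt_of_le hd hm)]
    simp
  push_neg at hm
  -- key identity
  have key : ∑ p ∈ Finset.range N, q.eval (ζ ^ p) * ζ ^ (p * (N - m)) = (N : ℂ) * q.coeff m := by
    have expand : ∀ p, q.eval (ζ ^ p) = ∑ i ∈ Finset.range N, q.coeff i * (ζ ^ p) ^ i :=
      fun p => Polynomial.eval_eq_sum_range' hd _
    calc ∑ p ∈ Finset.range N, q.eval (ζ ^ p) * ζ ^ (p * (N - m))
        = ∑ p ∈ Finset.range N, ∑ i ∈ Finset.range N,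
            q.coeff i * (ζ ^ (i + (N - m))) ^ p := by
          refine Finset.sum_congr rfl fun p _ => ?_
          rw [expand, Finset.sum_mul]
          refine Finset.sum_congr rfl fun i _ => ?_
          rw [mul_assoc, ← pow_mul, ← pow_mul, ← pow_add]
          congr 1
          ring
      _ = ∑ i ∈ Finset.range N, q.coeff i * ∑ p ∈ Finset.range N, (ζ ^ (i + (N - m))) ^ p := by
          rw [Finset.sum_comm]
          exact Finset.sum_congr rfl fun i _ => (Finset.mul_sum _ _ _).symm
      _ = (N : ℂ) * q.coeff m := by
          have hval : ∀ i ∈ Finset.range N,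
              q.coeff i * (∑ p ∈ Finset.range N, (ζ ^ (i + (N - m))) ^ p)
                = if i = m then (N : ℂ) * q.coeff m else 0 := by
            intro i hi
            rw [Finset.mem_range] at hi
            rw [BL.sum_pow_unity hN (by rw [← pow_mul, mul_comm, pow_mul, hζ1, one_pow])]
            by_cases him : i = m
            · rw [him, Nat.add_sub_cancel' hm.le, hζ1, if_pos rfl, if_pos rfl, mul_comm]
            · rw [if_neg him, if_neg, mul_zero]
              intro h1
              have hdvd : (N : ℕ) ∣ (i + (N - m)) := by
                have := (Complex.isPrimitiveRoot_exp N hN.ne').pow_eq_one_iff_dvd (i + (N - m))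
                rw [← this]
                have : Complex.exp (2 * Real.pi * Complex.I / N) = ζ := by
                  rw [hζ]
                  congr 1
                  push_cast
                  ring
                rw [this]
                exact h1
              have heq : i + (N - m) = N :=
                Nat.eq_of_dvd_of_lt_two_mul (by omega) hdvd (by omega)
              omega
          rw [Finset.sum_congr rfl hval, Finset.sum_ite_eq' (Finset.range N) m,
            if_pos (Finset.mem_range.mpr hm)]
  -- conclude
  by_contra hcon
  push_neg at hcon
  have hub : (N : ℝ) * ‖q.coeff m‖ ≤
      ∑ p ∈ Finset.range N, ‖q.eval (ζ ^ p)‖ := by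
    calc (N : ℝ) * ‖q.coeff m‖
        = ‖(N : ℂ) * q.coeff m‖ := by simp
      _ = ‖∑ p ∈ Finset.range N, q.eval (ζ ^ p) * ζ ^ (p * (N - m))‖ := by rw [key]
      _ ≤ ∑ p ∈ Finset.range N, ‖q.eval (ζ ^ p) * ζ ^ (p * (N - m))‖ :=
          norm_sum_le _ _
      _ = ∑ p ∈ Finset.range N, ‖q.eval (ζ ^ p)‖ := by
          refine Finset.sum_congr rfl fun p _ => ?_
          rw [norm_mul, habs, mul_one]
  have hlt : ∑ p ∈ Finset.range N, ‖q.eval (ζ ^ p)‖ <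
      ∑ p ∈ Finset.range N, ‖q.coeff m‖ := by
    refine Finset.sum_lt_sum_of_nonempty ⟨0, Finset.mem_range.mpr hN⟩ fun p hp => ?_
    exact hcon p (Finset.mem_range.mp hp)
  rw [Finset.sum_const, Finset.card_range, nsmul_eq_mul] at hlt
  exact absurd (hub.trans_lt hlt) (lt_irrefl _)

noncomputable def BLP (a b : ℕ) (c : ℕ → ℕ → ℂ) (u v : ℂ) : Polynomial (Polynomial ℂ) :=
  ∑ i ∈ Finset.range (a + 1), ∑ j ∈ Finset.range (b + 1),
    Polynomial.monomial i (Polynomial.monomial j (c i j * u ^ i * v ^ j))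

lemma BLP.coeff (a b : ℕ) (c : ℕ → ℕ → ℂ) (u v : ℂ) (i j : ℕ) :
    ((BLP a b c u v).coeff i).coeff j
      = if i ≤ a ∧ j ≤ b then c i j * u ^ i * v ^ j else 0 := by
  unfold BLP
  simp only [Polynomial.finset_sum_coeff, Polynomial.coeff_monomial,
    apply_ite (fun q : Polynomial ℂ => q.coeff j), Polynomial.coeff_zero]
  by_cases hi : i ≤ a
  · rw [Finset.sum_eq_single_of_mem i (Finset.mem_range.mpr (by omega))
      (fun x _ hx => Finset.sum_eq_zero fun x1 _ => if_neg hx)]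
    simp only [if_true, eq_self_iff_true]
    rw [Finset.sum_ite_eq' (Finset.range (b+1)) j]
    by_cases hj : j ≤ b
    · simp [Finset.mem_range, Nat.lt_succ_iff, hi, hj]
    · simp [Finset.mem_range, Nat.lt_succ_iff, hi, hj]
  · rw [if_neg (fun h => hi h.1)]
    refine Finset.sum_eq_zero fun x hx => Finset.sum_eq_zero fun x1 _ => if_neg ?_
    rw [Finset.mem_range] at hx
    omega

lemma BLP.coeff_abs (a b : ℕ) (c : ℕ → ℕ → ℂ)
    (hcoef : ∀ i j, c i j = -1 ∨ c i j = 0 ∨ c i j = 1)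
    {u v : ℂ} (hu : ‖u‖ = 1) (hv : ‖v‖ = 1) (i j : ℕ) :
    ((BLP a b c u v).coeff i).coeff j = 0 ∨
      ‖((BLP a b c u v).coeff i).coeff j‖ = 1 := by
  rw [BLP.coeff]
  split_ifs with h
  · rcases hcoef i j with hc | hc | hc
    · right; rw [hc]; simp [hu, hv]
    · left; rw [hc]; simp
    · right; rw [hc]; simp [hu, hv]
  · left; rfl

lemma BLP.ne_zero (a b : ℕ) (c : ℕ → ℕ → ℂ)
    (hne : ∃ i ≤ a, ∃ j ≤ b, c i j ≠ 0)
    {u v : ℂ} (hu : ‖u‖ = 1) (hv : ‖v‖ = 1) :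
    BLP a b c u v ≠ 0 := by
  obtain ⟨i, hi, j, hj, hc⟩ := hne
  intro h
  have := BLP.coeff a b c u v i j
  rw [h, if_pos ⟨hi, hj⟩] at this
  simp only [Polynomial.coeff_zero] at this
  have hu0 : u ≠ 0 := fun h0 => by simp [h0] at hu
  have hv0 : v ≠ 0 := fun h0 => by simp [h0] at hv
  apply hc
  have h2 : c i j * u ^ i * v ^ j = 0 := this.symm
  rcases mul_eq_zero.mp h2 with h3 | h3
  · rcases mul_eq_zero.mp h3 with h4 | h4
    · exact h4
    · exact absurd h4 (pow_ne_zero _ hu0)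
  · exact absurd h3 (pow_ne_zero _ hv0)

lemma BLP.natDegree_le (a b : ℕ) (c : ℕ → ℕ → ℂ) (u v : ℂ) :
    (BLP a b c u v).natDegree ≤ a := by
  refine Polynomial.natDegree_le_iff_coeff_eq_zero.mpr fun N hN => ?_
  ext j
  rw [BLP.coeff, if_neg (by omega)]
  simp

lemma BLP.coeff_natDegree_le (a b : ℕ) (c : ℕ → ℕ → ℂ) (u v : ℂ) (i : ℕ) :
    ((BLP a b c u v).coeff i).natDegree ≤ b := by
  refine Polynomial.natDegree_le_iff_coeff_eq_zero.mpr fun N hN => ?_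
  rw [BLP.coeff, if_neg (by omega)]

lemma BLP.trailing_abs (a b : ℕ) (c : ℕ → ℕ → ℂ)
    (hcoef : ∀ i j, c i j = -1 ∨ c i j = 0 ∨ c i j = 1)
    (hne : ∃ i ≤ a, ∃ j ≤ b, c i j ≠ 0)
    {u v : ℂ} (hu : ‖u‖ = 1) (hv : ‖v‖ = 1) :
    ‖(BLP a b c u v).trailingCoeff.trailingCoeff‖ = 1 := by
  have hP := BLP.ne_zero a b c hne hu hv
  have h1 : (BLP a b c u v).trailingCoeff ≠ 0 :=
    fun h => hP (Polynomial.trailingCoeff_eq_zero.mp h)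
  have h2 : (BLP a b c u v).trailingCoeff.trailingCoeff ≠ 0 :=
    fun h => h1 (Polynomial.trailingCoeff_eq_zero.mp h)
  have : (BLP a b c u v).trailingCoeff.trailingCoeff
      = ((BLP a b c u v).coeff (BLP a b c u v).natTrailingDegree).coeff
          ((BLP a b c u v).trailingCoeff.natTrailingDegree) := rfl
  rcases BLP.coeff_abs a b c hcoef hu hv (BLP a b c u v).natTrailingDegree
      ((BLP a b c u v).trailingCoeff.natTrailingDegree) with h | h
  · exact absurd (this.trans h) h2
  · rw [this]; exact h

lemma BL.trailingCoeff_prod {R : Type*} [CommRing R] [NoZeroDivisors R] {ι : Type*}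
    (s : Finset ι) (f : ι → Polynomial R) :
    (∏ i ∈ s, f i).trailingCoeff = ∏ i ∈ s, (f i).trailingCoeff := by
  classical
  induction s using Finset.cons_induction with
  | empty =>
    simp only [Finset.prod_empty]
    rw [Polynomial.trailingCoeff, Polynomial.natTrailingDegree_one, Polynomial.coeff_one_zero]
  | cons a s ha ih => rw [Finset.prod_cons, Finset.prod_cons, Polynomial.trailingCoeff_mul, ih]

lemma BLP.evalEval (a b : ℕ) (c : ℕ → ℕ → ℂ) (u v z₁ z₂ : ℂ) :
    (BLP a b c u v).evalEval z₂ z₁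
      = ∑ i ∈ Finset.range (a + 1), ∑ j ∈ Finset.range (b + 1),
          c i j * (u * z₁) ^ i * (v * z₂) ^ j := by
  unfold BLP
  rw [Polynomial.evalEval_finset_sum]
  refine Finset.sum_congr rfl fun i _ => ?_
  rw [Polynomial.evalEval_finset_sum]
  refine Finset.sum_congr rfl fun j _ => ?_
  rw [Polynomial.evalEval, Polynomial.eval_monomial, Polynomial.eval_mul, Polynomial.eval_pow,
    Polynomial.eval_C, Polynomial.eval_monomial]
  ring

lemma BL.angle (L : ℕ) (hL : 0 < L) (φ : ℝ) :
    ∃ θ : ℝ, |θ| ≤ Real.pi / L ∧ ∃ k < L,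
      Complex.exp ((2 * Real.pi / L : ℝ) * Complex.I) ^ k * Complex.exp ((φ : ℝ) * Complex.I)
        = Complex.exp ((θ : ℝ) * Complex.I) := by
  have hπ := Real.pi_pos
  have hL0 : (L : ℝ) ≠ 0 := Nat.cast_ne_zero.mpr hL.ne'
  have hLpos : (0:ℝ) < L := Nat.cast_pos.mpr hL
  set x : ℝ := φ * L / (2 * Real.pi) with hx
  set m : ℤ := -round x with hm
  set θ : ℝ := φ + 2 * Real.pi * m / L with hθ
  refine ⟨θ, ?_, ?_⟩
  · have h1 : θ = (2 * Real.pi / L) * (x - round x) := by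
      rw [hθ, hx]
      push_cast [hm]
      field_simp
      ring
    rw [h1, abs_mul, abs_of_pos (by positivity)]
    calc 2 * Real.pi / L * |x - ↑(round x)| ≤ 2 * Real.pi / L * (1/2) :=
          mul_le_mul_of_nonneg_left (abs_sub_round x) (by positivity)
      _ = Real.pi / L := by ring
  · have hmod_nonneg : 0 ≤ m % L := Int.emod_nonneg m (by exact_mod_cast hL.ne')
    have hmod_lt : m % L < L := Int.emod_lt_of_pos m (by exact_mod_cast hL)
    refine ⟨(m % L).toNat, ?_, ?_⟩
    · omega
    · set k : ℕ := (m % L).toNat with hk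
      set d : ℤ := m / L with hd
      have hkval : (k : ℝ) = (m : ℝ) - L * d := by
        have : (k : ℤ) = m % L := Int.toNat_of_nonneg hmod_nonneg
        have h2 : (k : ℤ) = m - L * d := by rw [this, hd, Int.emod_def]
        exact_mod_cast congrArg (Int.cast : ℤ → ℝ) h2
      rw [BL.zeta_pow, ← Complex.exp_add]
      have harg : (2 * Real.pi * k / L : ℝ) + φ = θ + (-(d:ℝ)) * (2 * Real.pi) := by
        rw [hθ, hkval]
        field_simp
        ring
      rw [Complex.exp_eq_exp_iff_exists_int]
      refine ⟨-d, ?_⟩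
      have hc := congrArg (fun t : ℝ => (t : ℂ)) harg
      push_cast at hc ⊢
      linear_combination hc * Complex.I

lemma BLP.eval_abs_le (a b : ℕ) (c : ℕ → ℕ → ℂ)
    (hcoef : ∀ i j, c i j = -1 ∨ c i j = 0 ∨ c i j = 1)
    {u v z₁ z₂ : ℂ} (hu : ‖u‖ = 1) (hv : ‖v‖ = 1)
    (h1 : ‖z₁‖ = 1) (h2 : ‖z₂‖ = 1) :
    ‖(BLP a b c u v).evalEval z₂ z₁‖ ≤ ((a : ℝ) + 1) * ((b : ℝ) + 1) := by
  have hc1 : ∀ i j, ‖c i j‖ ≤ 1 := by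
    intro i j
    rcases hcoef i j with h | h | h <;> simp [h]
  rw [BLP.evalEval]
  calc ‖∑ i ∈ Finset.range (a+1), ∑ j ∈ Finset.range (b+1),
          c i j * (u * z₁) ^ i * (v * z₂) ^ j‖
      ≤ ∑ i ∈ Finset.range (a+1), ‖∑ j ∈ Finset.range (b+1),
          c i j * (u * z₁) ^ i * (v * z₂) ^ j‖ := norm_sum_le _ _
    _ ≤ ∑ i ∈ Finset.range (a+1), ∑ j ∈ Finset.range (b+1),
          ‖c i j * (u * z₁) ^ i * (v * z₂) ^ j‖ :=
        Finset.sum_le_sum fun i _ => norm_sum_le _ _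
    _ ≤ ∑ i ∈ Finset.range (a+1), ∑ j ∈ Finset.range (b+1), (1:ℝ) := by
        refine Finset.sum_le_sum fun i _ => Finset.sum_le_sum fun j _ => ?_
        rw [norm_mul, norm_mul, norm_pow, norm_pow, norm_mul, norm_mul, hu, hv, h1, h2]
        simpa using hc1 i j
    _ = ((a : ℝ) + 1) * ((b : ℝ) + 1) := by
        simp [Finset.sum_const, Finset.card_range]
        ring

/-- Bivariate Littlewood lemma: if `f(z₁,z₂) = Σ_{i ≤ a, j ≤ b} c i j · z₁^i z₂^j` is a
nonzero polynomial with all coefficients in `{−1,0,1}` (`a, b ≥ 1`), then for all positive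
integers `L₁, L₂` there are angles `θ₁, θ₂` with `|θ₁| ≤ π/L₁`, `|θ₂| ≤ π/L₂` and
`|f(e^{iθ₁}, e^{iθ₂})| ≥ ((a+1)(b+1))^{−(L₁L₂−1)}`. -/
theorem bivariate_littlewood (a b : ℕ) (ha : 1 ≤ a) (hb : 1 ≤ b)
    (c : ℕ → ℕ → ℂ)
    (hcoef : ∀ i j, c i j = -1 ∨ c i j = 0 ∨ c i j = 1)
    (hne : ∃ i ≤ a, ∃ j ≤ b, c i j ≠ 0)
    (L₁ L₂ : ℕ) (hL₁ : 0 < L₁) (hL₂ : 0 < L₂) :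
    ∃ θ₁ θ₂ : ℝ, |θ₁| ≤ Real.pi / L₁ ∧ |θ₂| ≤ Real.pi / L₂ ∧
      ((((a : ℝ) + 1) * ((b : ℝ) + 1)) ^ (L₁ * L₂ - 1))⁻¹ ≤
        ‖∑ i ∈ Finset.range (a + 1), ∑ j ∈ Finset.range (b + 1),
          c i j * Complex.exp (θ₁ * Complex.I) ^ i * Complex.exp (θ₂ * Complex.I) ^ j‖ := by
  classical
  set ω₁ : ℂ := Complex.exp ((2 * Real.pi / L₁ : ℝ) * Complex.I) with hω₁
  set ω₂ : ℂ := Complex.exp ((2 * Real.pi / L₂ : ℝ) * Complex.I) with hω₂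
  clear_value ω₁ ω₂
  have habs1 : ∀ k : ℕ, ‖ω₁ ^ k‖ = 1 := fun k => by
    rw [hω₁, BL.zeta_pow]; exact Complex.norm_exp_ofReal_mul_I _
  have habs2 : ∀ k : ℕ, ‖ω₂ ^ k‖ = 1 := fun k => by
    rw [hω₂, BL.zeta_pow]; exact Complex.norm_exp_ofReal_mul_I _
  set s : Finset (ℕ × ℕ) := Finset.range L₁ ×ˢ Finset.range L₂ with hs
  clear_value s
  have hscard : s.card = L₁ * L₂ := by
    rw [hs, Finset.card_product, Finset.card_range, Finset.card_range]
  set g : Polynomial (Polynomial ℂ) :=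
    ∏ kl ∈ s, BLP a b c (ω₁ ^ kl.1) (ω₂ ^ kl.2) with hg
  clear_value g
  set r : Polynomial ℂ := g.trailingCoeff with hr
  clear_value r
  have hr_prod : r = ∏ kl ∈ s, (BLP a b c (ω₁ ^ kl.1) (ω₂ ^ kl.2)).trailingCoeff := by
    rw [hr, hg, BL.trailingCoeff_prod]
  have hrtc : ‖r.trailingCoeff‖ = 1 := by
    have h1 : ∀ kl ∈ s, ‖(BLP a b c (ω₁ ^ kl.1) (ω₂ ^ kl.2)).trailingCoeff.trailingCoeff‖ = 1 :=
      fun kl _ => BLP.trailing_abs a b c hcoef hne (habs1 kl.1) (habs2 kl.2)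
    rw [hr_prod, BL.trailingCoeff_prod, norm_prod]
    rw [Finset.prod_congr rfl h1]
    simp
  have hrdeg : r.natDegree ≤ b * (L₁ * L₂) := by
    rw [hr_prod]
    refine (Polynomial.natDegree_prod_le _ _).trans ?_
    calc ∑ kl ∈ s, ((BLP a b c (ω₁ ^ kl.1) (ω₂ ^ kl.2)).trailingCoeff).natDegree
        ≤ ∑ kl ∈ s, b :=
          Finset.sum_le_sum fun kl _ => BLP.coeff_natDegree_le a b c _ _ _
      _ = b * (L₁ * L₂) := by rw [Finset.sum_const, hscard, smul_eq_mul, mul_comm]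
  -- sample in z₂
  set N₂ : ℕ := b * (L₁ * L₂) + 1 with hN₂
  clear_value N₂
  obtain ⟨q, hqN, hq⟩ := BL.sample r N₂ (by omega) (by omega) r.natTrailingDegree
  set z₂ : ℂ := Complex.exp ((2 * Real.pi / N₂ : ℝ) * Complex.I) ^ q with hz₂
  clear_value z₂
  have habsz₂ : ‖z₂‖ = 1 := by
    rw [hz₂, BL.zeta_pow]; exact Complex.norm_exp_ofReal_mul_I _
  have h1le : (1 : ℝ) ≤ ‖r.eval z₂‖ := by
    rw [← hrtc]; exact hq
  -- sample in z₁
  set Q : Polynomial ℂ := g.map (Polynomial.evalRingHom z₂) with hQ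
  clear_value Q
  have hQm : Q.coeff g.natTrailingDegree = r.eval z₂ := by
    rw [hQ, Polynomial.coeff_map, hr]; rfl
  have hgdeg : g.natDegree ≤ a * (L₁ * L₂) := by
    rw [hg]
    refine (Polynomial.natDegree_prod_le _ _).trans ?_
    calc ∑ kl ∈ s, (BLP a b c (ω₁ ^ kl.1) (ω₂ ^ kl.2)).natDegree
        ≤ ∑ kl ∈ s, a := Finset.sum_le_sum fun kl _ => BLP.natDegree_le a b c _ _
      _ = a * (L₁ * L₂) := by rw [Finset.sum_const, hscard, smul_eq_mul, mul_comm]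
  set N₁ : ℕ := a * (L₁ * L₂) + 1 with hN₁
  clear_value N₁
  have hQdeg : Q.natDegree < N₁ := by
    have h := Polynomial.natDegree_map_le (f := Polynomial.evalRingHom z₂) (p := g)
    rw [← hQ] at h
    omega
  obtain ⟨p, hpN, hp⟩ := BL.sample Q N₁ (by omega) hQdeg g.natTrailingDegree
  set z₁ : ℂ := Complex.exp ((2 * Real.pi / N₁ : ℝ) * Complex.I) ^ p with hz₁
  clear_value z₁
  have habsz₁ : ‖z₁‖ = 1 := by
    rw [hz₁, BL.zeta_pow]; exact Complex.norm_exp_ofReal_mul_I _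
  have h2le : (1 : ℝ) ≤ ‖Q.eval z₁‖ := by
    calc (1:ℝ) ≤ ‖r.eval z₂‖ := h1le
      _ = ‖Q.coeff g.natTrailingDegree‖ := by rw [hQm]
      _ ≤ ‖Q.eval z₁‖ := hp
  -- express as product
  have hprod : Q.eval z₁ = ∏ kl ∈ s, (BLP a b c (ω₁ ^ kl.1) (ω₂ ^ kl.2)).evalEval z₂ z₁ := by
    rw [hQ, Polynomial.map_evalRingHom_eval, hg, Polynomial.evalEval_prod]
  -- choose angles
  obtain ⟨θ₁, hθ₁, k₀, hk₀, hexp₁⟩ := BL.angle L₁ hL₁ (2 * Real.pi * p / N₁)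
  obtain ⟨θ₂, hθ₂, l₀, hl₀, hexp₂⟩ := BL.angle L₂ hL₂ (2 * Real.pi * q / N₂)
  have hz₁exp : ω₁ ^ k₀ * z₁ = Complex.exp ((θ₁ : ℝ) * Complex.I) := by
    rw [hz₁, BL.zeta_pow, ← hexp₁, hω₁]
  have hz₂exp : ω₂ ^ l₀ * z₂ = Complex.exp ((θ₂ : ℝ) * Complex.I) := by
    rw [hz₂, BL.zeta_pow, ← hexp₂, hω₂]
  refine ⟨θ₁, θ₂, hθ₁, hθ₂, ?_⟩
  set S : ℂ := ∑ i ∈ Finset.range (a + 1), ∑ j ∈ Finset.range (b + 1),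
      c i j * Complex.exp ((θ₁:ℝ) * Complex.I) ^ i * Complex.exp ((θ₂:ℝ) * Complex.I) ^ j
    with hS
  clear_value S
  have hfactor : (BLP a b c (ω₁ ^ k₀) (ω₂ ^ l₀)).evalEval z₂ z₁ = S := by
    rw [BLP.evalEval, hS, hz₁exp, hz₂exp]
  set M : ℝ := ((a : ℝ) + 1) * ((b : ℝ) + 1) with hM
  clear_value M
  have hmem : (k₀, l₀) ∈ s := by
    rw [hs, Finset.mem_product]
    exact ⟨Finset.mem_range.mpr hk₀, Finset.mem_range.mpr hl₀⟩
  have hbound : ∀ kl ∈ s, ‖(BLP a b c (ω₁ ^ kl.1) (ω₂ ^ kl.2)).evalEval z₂ z₁‖ ≤ M :=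
    fun kl _ => by
      rw [hM]; exact BLP.eval_abs_le a b c hcoef (habs1 kl.1) (habs2 kl.2) habsz₁ habsz₂
  have hM1 : (1:ℝ) ≤ M := by
    rw [hM]
    nlinarith [Nat.cast_nonneg (α := ℝ) a, Nat.cast_nonneg (α := ℝ) b]
  have key : (1 : ℝ) ≤ ‖S‖ * M ^ (L₁ * L₂ - 1) := by
    calc (1:ℝ) ≤ ‖Q.eval z₁‖ := h2le
      _ = ∏ kl ∈ s, ‖(BLP a b c (ω₁ ^ kl.1) (ω₂ ^ kl.2)).evalEval z₂ z₁‖ := by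
          rw [hprod, norm_prod]
      _ = ‖(BLP a b c (ω₁ ^ k₀) (ω₂ ^ l₀)).evalEval z₂ z₁‖ *
          ∏ kl ∈ s.erase (k₀, l₀),
            ‖(BLP a b c (ω₁ ^ kl.1) (ω₂ ^ kl.2)).evalEval z₂ z₁‖ :=
          (Finset.mul_prod_erase s _ hmem).symm
      _ ≤ ‖S‖ * M ^ (L₁ * L₂ - 1) := by
          rw [hfactor]
          refine mul_le_mul_of_nonneg_left ?_ (norm_nonneg _)
          calc ∏ kl ∈ s.erase (k₀, l₀),
              ‖(BLP a b c (ω₁ ^ kl.1) (ω₂ ^ kl.2)).evalEval z₂ z₁‖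
              ≤ ∏ kl ∈ s.erase (k₀, l₀), M :=
                Finset.prod_le_prod (fun kl _ => norm_nonneg _)
                  (fun kl hkl => hbound kl (Finset.mem_of_mem_erase hkl))
            _ = M ^ (L₁ * L₂ - 1) := by
                rw [Finset.prod_const, Finset.card_erase_of_mem hmem, hscard]
  have hMpow : (0:ℝ) < M ^ (L₁ * L₂ - 1) := pow_pos (by linarith) _
  rw [inv_eq_one_div, div_le_iff₀ hMpow]
  exact key
end

section
/- Let f₁, …, f_m be nonzero polynomials in two complex variables, each with all coefficients in {−1,0,1}. Then there exist complex numbers z₁, z₂ with |z₁| = |z₂| = 1 such that |f₁(z₁,z₂) · f₂(z₁,z₂) ⋯ f_m(z₁,z₂)| ≥ 1. -/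
open Finset MvPolynomial

lemma root_sum {N : ℕ} (hN : 0 < N) {ζ : ℂ} (hζ : IsPrimitiveRoot ζ N) (k : ℕ)
    (hk0 : 0 < k) (hk : k < 2 * N) :
    ∑ a ∈ Finset.range N, (ζ ^ k) ^ a = if k = N then (N : ℂ) else 0 := by
  by_cases h : k = N
  · subst h
    simp [hζ.pow_eq_one]
  · rw [if_neg h]
    have hne : ζ ^ k ≠ 1 := by
      intro hh
      rcases (hζ.pow_eq_one_iff_dvd k).mp hh with ⟨c, hc⟩
      have h2 : c < 2 := by nlinarith
      have h1 : c ≠ 0 := by rintro rfl; omega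
      have h3 : c = 1 := by omega
      subst h3; omega
    rw [geom_sum_eq hne]
    have : (ζ ^ k) ^ N = 1 := by
      rw [← pow_mul, mul_comm, pow_mul, hζ.pow_eq_one, one_pow]
    rw [this]
    simp

lemma key_identity (F : MvPolynomial (Fin 2) ℂ) (s : Fin 2 →₀ ℕ) (hs : s ∈ F.support)
    (N : ℕ) (hN : 0 < N) (hbound : ∀ t ∈ F.support, t 0 < N ∧ t 1 < N)
    {ζ : ℂ} (hζ : IsPrimitiveRoot ζ N) :
    ∑ a ∈ Finset.range N, ∑ b ∈ Finset.range N,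
      MvPolynomial.eval ![ζ ^ a, ζ ^ b] F * ζ ^ (a * (N - s 0) + b * (N - s 1))
      = (N : ℂ) * N * F.coeff s := by
  have hs0 : s 0 < N := (hbound s hs).1
  have hs1 : s 1 < N := (hbound s hs).2
  have step1 : ∑ a ∈ Finset.range N, ∑ b ∈ Finset.range N,
      MvPolynomial.eval ![ζ ^ a, ζ ^ b] F * ζ ^ (a * (N - s 0) + b * (N - s 1))
      = ∑ t ∈ F.support, F.coeff t *
          ((∑ a ∈ Finset.range N, (ζ ^ (t 0 + (N - s 0))) ^ a) *
           (∑ b ∈ Finset.range N, (ζ ^ (t 1 + (N - s 1))) ^ b)) := by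
    simp only [eval_eq', Fin.prod_univ_two, Matrix.cons_val_zero, Matrix.cons_val_one,
      Matrix.head_cons, Finset.sum_mul]
    calc (∑ a ∈ Finset.range N, ∑ b ∈ Finset.range N, ∑ t ∈ F.support,
        F.coeff t * ((ζ ^ a) ^ t 0 * (ζ ^ b) ^ t 1) * ζ ^ (a * (N - s 0) + b * (N - s 1)))
        = ∑ a ∈ Finset.range N, ∑ t ∈ F.support, ∑ b ∈ Finset.range N,
          F.coeff t * ((ζ ^ a) ^ t 0 * (ζ ^ b) ^ t 1) * ζ ^ (a * (N - s 0) + b * (N - s 1)) :=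
        Finset.sum_congr rfl fun a _ => Finset.sum_comm
      _ = ∑ t ∈ F.support, ∑ a ∈ Finset.range N, ∑ b ∈ Finset.range N,
          F.coeff t * ((ζ ^ a) ^ t 0 * (ζ ^ b) ^ t 1) * ζ ^ (a * (N - s 0) + b * (N - s 1)) :=
        Finset.sum_comm
      _ = ∑ t ∈ F.support, F.coeff t *
          ((∑ a ∈ Finset.range N, (ζ ^ (t 0 + (N - s 0))) ^ a) *
           (∑ b ∈ Finset.range N, (ζ ^ (t 1 + (N - s 1))) ^ b)) := by
        refine Finset.sum_congr rfl fun t _ => ?_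
        rw [Finset.sum_mul_sum, Finset.mul_sum]
        refine Finset.sum_congr rfl fun a _ => ?_
        rw [Finset.mul_sum]
        refine Finset.sum_congr rfl fun b _ => ?_
        simp only [← pow_mul, mul_assoc, ← pow_add]
        congr 2
        ring
      _ = ∑ t ∈ F.support, F.coeff t * ∑ a ∈ Finset.range N,
          ((ζ ^ (t 0 + (N - s 0))) ^ a * ∑ b ∈ Finset.range N, (ζ ^ (t 1 + (N - s 1))) ^ b) :=
        Finset.sum_congr rfl fun t _ => by rw [Finset.sum_mul]
  rw [step1]
  have step2 : ∀ t ∈ F.support, F.coeff t *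
      ((∑ a ∈ Finset.range N, (ζ ^ (t 0 + (N - s 0))) ^ a) *
       (∑ b ∈ Finset.range N, (ζ ^ (t 1 + (N - s 1))) ^ b))
      = F.coeff t * ((if t 0 = s 0 then (N : ℂ) else 0) * (if t 1 = s 1 then (N : ℂ) else 0)) := by
    intro t ht
    have ht0 : t 0 < N := (hbound t ht).1
    have ht1 : t 1 < N := (hbound t ht).2
    rw [root_sum hN hζ _ (by omega) (by omega), root_sum hN hζ _ (by omega) (by omega)]
    congr 2
    · congr 1
      simp only [eq_iff_iff]
      omega
    · congr 1
      simp only [eq_iff_iff]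
      omega
  rw [Finset.sum_congr rfl step2]
  rw [Finset.sum_eq_single s]
  · simp; ring
  · intro t ht hts
    have : ¬(t 0 = s 0 ∧ t 1 = s 1) := by
      intro ⟨h0, h1⟩
      exact hts (Finsupp.ext (Fin.forall_fin_two.mpr ⟨h0, h1⟩))
    by_cases h0 : t 0 = s 0 <;> by_cases h1 : t 1 = s 1 <;> simp_all
  · intro h; exact absurd hs h


/-- If `f₁, …, f_m` are nonzero bivariate Littlewood polynomials (all coefficients in
`{−1,0,1}`), then there are points `z₁, z₂` on the unit circle with
`|f₁(z₁,z₂) · f₂(z₁,z₂) ⋯ f_m(z₁,z₂)| ≥ 1`. -/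
theorem littlewood_product_ge_one (m : ℕ) (f : Fin m → MvPolynomial (Fin 2) ℂ)
    (hne : ∀ k, f k ≠ 0)
    (hcoef : ∀ k s, (f k).coeff s = -1 ∨ (f k).coeff s = 0 ∨ (f k).coeff s = 1) :
    ∃ z₁ z₂ : ℂ, ‖z₁‖ = 1 ∧ ‖z₂‖ = 1 ∧
      1 ≤ ‖∏ k : Fin m, MvPolynomial.eval ![z₁, z₂] (f k)‖ := by
  classical
  set F : MvPolynomial (Fin 2) ℂ := ∏ k, f k with hF
  have hF0 : F ≠ 0 := Finset.prod_ne_zero_iff.mpr fun k _ => hne k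
  -- all coefficients of F are integers
  have hint : ∀ s, F.coeff s ∈ (Int.castRingHom ℂ).range := by
    have := Finset.prod_induction (s := (Finset.univ : Finset (Fin m))) f (fun P => ∀ s, P.coeff s ∈ (Int.castRingHom ℂ).range)
      (fun a b ha hb s => by
        rw [MvPolynomial.coeff_mul]
        exact Subring.sum_mem _ fun x _ => Subring.mul_mem _ (ha _) (hb _))
      (fun s => by
        rw [MvPolynomial.coeff_one]
        split_ifs
        · exact ⟨1, by simp⟩
        · exact ⟨0, by simp⟩)
      (fun k _ s => by
        rcases hcoef k s with h | h | h
        · exact ⟨-1, by simp [h]⟩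
        · exact ⟨0, by simp [h]⟩
        · exact ⟨1, by simp [h]⟩)
    exact this
  obtain ⟨s, hcs⟩ := MvPolynomial.ne_zero_iff.mp hF0
  have hs : s ∈ F.support := MvPolynomial.mem_support_iff.mpr hcs
  obtain ⟨n, hn⟩ := hint s
  simp only [Int.coe_castRingHom] at hn
  have hn0 : n ≠ 0 := by rintro rfl; simp at hn; exact hcs hn.symm
  have habs : 1 ≤ ‖F.coeff s‖ := by
    rw [← hn, Complex.norm_intCast]
    have := Int.one_le_abs hn0
    exact_mod_cast this
  set N : ℕ := F.totalDegree + 1 with hNdef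
  have hNpos : 0 < N := Nat.succ_pos _
  have hbound : ∀ t ∈ F.support, t 0 < N ∧ t 1 < N := by
    intro t ht
    have hsum : (t.sum fun _ e => e) ≤ F.totalDegree := MvPolynomial.le_totalDegree ht
    have hle : ∀ i : Fin 2, t i ≤ t.sum fun _ e => e := by
      intro i
      by_cases h : t i = 0
      · simp [h]
      · exact Finset.single_le_sum (fun _ _ => Nat.zero_le _) (Finsupp.mem_support_iff.mpr h)
    exact ⟨by have := hle 0; omega, by have := hle 1; omega⟩
  set ζ : ℂ := Complex.exp (2 * Real.pi * Complex.I / N) with hζdef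
  have hζ : IsPrimitiveRoot ζ N := Complex.isPrimitiveRoot_exp N hNpos.ne'
  have habsζ : ‖ζ‖ = 1 := by
    rw [hζdef, show (2 * (Real.pi : ℂ) * Complex.I / N) = ((2 * Real.pi / N : ℝ) : ℂ) * Complex.I
      by push_cast; ring]
    exact Complex.norm_exp_ofReal_mul_I _
  have habsζpow : ∀ j : ℕ, ‖ζ ^ j‖ = 1 := fun j => by
    rw [norm_pow, habsζ, one_pow]
  by_contra hcon
  push_neg at hcon
  have hlt : ∀ a b : ℕ, ‖MvPolynomial.eval ![ζ ^ a, ζ ^ b] F‖ < 1 := by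
    intro a b
    have := hcon (ζ ^ a) (ζ ^ b) (habsζpow a) (habsζpow b)
    rwa [hF, map_prod]
  have key := key_identity F s hs N hNpos hbound hζ
  -- lower bound for the absolute value of the sum
  have hNr : (0:ℝ) ≤ (N:ℝ) := Nat.cast_nonneg N
  have h1 : ((N : ℝ) * N) ≤ ‖(N : ℂ) * N * F.coeff s‖ := by
    rw [norm_mul, norm_mul, Complex.norm_natCast]
    nlinarith
  have h2 : ‖∑ a ∈ Finset.range N, ∑ b ∈ Finset.range N,
      MvPolynomial.eval ![ζ ^ a, ζ ^ b] F * ζ ^ (a * (N - s 0) + b * (N - s 1))‖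
      ≤ ∑ a ∈ Finset.range N, ∑ b ∈ Finset.range N,
        ‖MvPolynomial.eval ![ζ ^ a, ζ ^ b] F‖ := by
    refine le_trans (norm_sum_le _ _) (Finset.sum_le_sum fun a _ => ?_)
    refine le_trans (norm_sum_le _ _) (Finset.sum_le_sum fun b _ => ?_)
    rw [norm_mul, habsζpow, mul_one]
  have h3 : ∑ a ∈ Finset.range N, ∑ b ∈ Finset.range N,
      ‖MvPolynomial.eval ![ζ ^ a, ζ ^ b] F‖ < (N : ℝ) * N := by
    have hinner : ∀ a : ℕ, ∑ b ∈ Finset.range N,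
        ‖MvPolynomial.eval ![ζ ^ a, ζ ^ b] F‖ < (N : ℝ) := by
      intro a
      calc ∑ b ∈ Finset.range N, ‖MvPolynomial.eval ![ζ ^ a, ζ ^ b] F‖
          < ∑ _b ∈ Finset.range N, (1 : ℝ) :=
            Finset.sum_lt_sum_of_nonempty (Finset.nonempty_range_iff.mpr hNpos.ne')
              fun b _ => hlt a b
        _ = N := by simp
    calc ∑ a ∈ Finset.range N, ∑ b ∈ Finset.range N,
          ‖MvPolynomial.eval ![ζ ^ a, ζ ^ b] F‖
        < ∑ _a ∈ Finset.range N, (N : ℝ) :=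
          Finset.sum_lt_sum_of_nonempty (Finset.nonempty_range_iff.mpr hNpos.ne')
            fun a _ => hinner a
      _ = (N : ℝ) * N := by simp [mul_comm]
  rw [← key] at h1
  linarith
end

section
/- For every real number r with 0 ≤ r < 1 and every real number θ, the inequality |e^{iθ} − r| ≤ (1 − r) · exp( r·θ² / (2·(1−r)²) ) holds, where |·| denotes the modulus in ℂ and e^{iθ} = cos θ + i·sin θ. -/
/-- For every real `r` with `0 ≤ r < 1` and every real `θ`,
`|e^{iθ} − r| ≤ (1 − r) · exp(r·θ² / (2·(1−r)²))`. -/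
theorem abs_exp_I_sub_le (r θ : ℝ) (hr0 : 0 ≤ r) (hr1 : r < 1) :
    ‖Complex.exp (θ * Complex.I) - (r : ℂ)‖ ≤
      (1 - r) * Real.exp (r * θ ^ 2 / (2 * (1 - r) ^ 2)) := by
  have h1r : (0:ℝ) < 1 - r := by linarith
  have habs : ‖Complex.exp (θ * Complex.I) - (r : ℂ)‖ ^ 2
      = (Real.cos θ - r) ^ 2 + Real.sin θ ^ 2 := by
    rw [Complex.sq_norm, Complex.normSq_apply]
    simp [Complex.exp_ofReal_mul_I_re, Complex.exp_ofReal_mul_I_im]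
    ring
  have hcos : 1 - θ ^ 2 / 2 ≤ Real.cos θ := Real.one_sub_sq_div_two_le_cos
  have hx : 0 ≤ r * θ ^ 2 / (2 * (1 - r) ^ 2) / 2 * 2 := by positivity
  have hexp : 1 + r * θ ^ 2 / (1 - r) ^ 2 ≤ Real.exp (r * θ ^ 2 / (2 * (1 - r) ^ 2)) ^ 2 := by
    rw [← Real.exp_nat_mul]
    have := Real.add_one_le_exp ((2:ℕ) * (r * θ ^ 2 / (2 * (1 - r) ^ 2)))
    have h2 : ((2:ℕ):ℝ) * (r * θ ^ 2 / (2 * (1 - r) ^ 2)) = r * θ ^ 2 / (1 - r) ^ 2 := by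
      push_cast
      field_simp
    linarith [h2 ▸ this]
  have hsq : ‖Complex.exp (θ * Complex.I) - (r : ℂ)‖ ^ 2
      ≤ ((1 - r) * Real.exp (r * θ ^ 2 / (2 * (1 - r) ^ 2))) ^ 2 := by
    rw [habs, mul_pow]
    have hsin : Real.sin θ ^ 2 = 1 - Real.cos θ ^ 2 := by
      have := Real.sin_sq_add_cos_sq θ; linarith
    rw [hsin]
    have key : (Real.cos θ - r) ^ 2 + (1 - Real.cos θ ^ 2)
        = (1 - r) ^ 2 + 2 * r * (1 - Real.cos θ) := by ring
    rw [key]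
    have h2 : 2 * r * (1 - Real.cos θ) ≤ r * θ ^ 2 := by nlinarith
    have h3 : (1 - r) ^ 2 + r * θ ^ 2
        = (1 - r) ^ 2 * (1 + r * θ ^ 2 / (1 - r) ^ 2) := by
      field_simp
    nlinarith [sq_nonneg (1 - r), hexp]
  have hb : 0 ≤ (1 - r) * Real.exp (r * θ ^ 2 / (2 * (1 - r) ^ 2)) := by positivity
  nlinarith [norm_nonneg (Complex.exp (θ * Complex.I) - (r : ℂ)), hsq, hb]
end
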